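/- arXiv:2509.10030 — 7 statements merged into one kernel-verified Lean document; each statement's English description precedes it below -/
import Mathlib

section
/- Let N be a positive integer. Then |E_N| = 2|E_{N-1}| if and only if there is no choice of w_1,…,w_{N-1} ∈ {-1,0,1} with ∑_{n=1}^{N-1} w_n/n = 1/N. -/
/-- `E N`: the set of Egyptian fractions with denominators at most `N`,
i.e. all sums `∑_{n=1}^N t_n / n` with `t_n ∈ {0,1}`. -/
def egyptianSet (N : ℕ) : Finset ℚ :=
  (Finset.Icc 1 N).powerset.image (fun (S : Finset ℕ) => ∑ n ∈ S, (1 : ℚ) / (n : ℚ))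

lemma egyptian_succ (M : ℕ) :
    egyptianSet (M+1) = egyptianSet M ∪ (egyptianSet M).image (fun x => x + 1/((M:ℚ)+1)) := by
  unfold egyptianSet
  have h1 : Finset.Icc 1 (M+1) = insert (M+1) (Finset.Icc 1 M) := by
    ext n
    simp only [Finset.mem_Icc, Finset.mem_insert]
    omega
  rw [h1, Finset.powerset_insert, Finset.image_union, Finset.image_image, Finset.image_image]
  congr 1
  apply Finset.image_congr
  intro S hS
  simp only [Finset.mem_coe, Finset.mem_powerset] at hS
  have hns : (M+1) ∉ S := by
    intro h
    have := hS h
    simp only [Finset.mem_Icc] at this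
    omega
  simp only [Function.comp_apply, Finset.sum_insert hns]
  push_cast
  ring

theorem card_egyptianSet_doubles_iff (N : ℕ) (hN : 1 ≤ N) :
    (egyptianSet N).card = 2 * (egyptianSet (N - 1)).card ↔
      ∀ w : ℕ → ℤ, (∀ n, w n = -1 ∨ w n = 0 ∨ w n = 1) →
        ∑ n ∈ Finset.Icc 1 (N - 1), (w n : ℚ) / (n : ℚ) ≠ 1 / (N : ℚ) := by
  obtain ⟨M, rfl⟩ : ∃ M, N = M + 1 := ⟨N - 1, by omega⟩
  simp only [Nat.add_sub_cancel]
  set E := egyptianSet M with hE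
  set c : ℚ := 1/((M:ℚ)+1) with hc
  have hcN : (1 : ℚ) / ((M+1 : ℕ) : ℚ) = c := by push_cast [hc]; ring
  have hinj : Function.Injective (fun x : ℚ => x + c) := fun a b h => by
    simpa using h
  have hcardim : (E.image (fun x => x + c)).card = E.card :=
    Finset.card_image_of_injective _ hinj
  have hdis : (egyptianSet (M+1)).card = 2 * E.card ↔ Disjoint E (E.image (fun x => x + c)) := by
    rw [egyptian_succ M, ← hc]
    constructor
    · intro h
      have key := Finset.card_union_add_card_inter E (E.image (fun x => x + c))
      rw [h, hcardim] at key
      rw [Finset.disjoint_iff_inter_eq_empty, ← Finset.card_eq_zero]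
      omega
    · intro h
      rw [Finset.card_union_of_disjoint h, hcardim]
      ring
  rw [hdis]
  constructor
  · intro hd w hw hsum
    set S : Finset ℕ := (Finset.Icc 1 M).filter (fun n => w n = 1) with hS
    set T : Finset ℕ := (Finset.Icc 1 M).filter (fun n => w n = -1) with hT
    have hsplit : ∑ n ∈ Finset.Icc 1 M, (w n : ℚ) / (n : ℚ)
        = (∑ n ∈ S, (1:ℚ)/(n:ℚ)) - (∑ n ∈ T, (1:ℚ)/(n:ℚ)) := by
      rw [hS, hT, Finset.sum_filter, Finset.sum_filter, ← Finset.sum_sub_distrib]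
      apply Finset.sum_congr rfl
      intro n _
      rcases hw n with h | h | h <;> simp [h, neg_div, one_div]
    have hSE : (∑ n ∈ S, (1:ℚ)/(n:ℚ)) ∈ E := by
      rw [hE]
      apply Finset.mem_image_of_mem
      simp only [Finset.mem_powerset, hS]
      exact Finset.filter_subset _ _
    have hTE : (∑ n ∈ T, (1:ℚ)/(n:ℚ)) ∈ E := by
      rw [hE]
      apply Finset.mem_image_of_mem
      simp only [Finset.mem_powerset, hT]
      exact Finset.filter_subset _ _
    rw [hsplit, hcN] at hsum
    have hmem : (∑ n ∈ S, (1:ℚ)/(n:ℚ)) ∈ E.image (fun x => x + c) := by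
      rw [Finset.mem_image]
      exact ⟨∑ n ∈ T, (1:ℚ)/(n:ℚ), hTE, by linarith⟩
    exact (Finset.disjoint_left.mp hd hSE) hmem
  · intro hw
    rw [Finset.disjoint_right]
    intro a ha hamem
    obtain ⟨b, hb, rfl⟩ := Finset.mem_image.mp ha
    rw [hE] at hb hamem
    obtain ⟨T, hT, rfl⟩ := Finset.mem_image.mp hb
    obtain ⟨S, hSmem, hSsum⟩ := Finset.mem_image.mp hamem
    simp only [Finset.mem_powerset] at hT hSmem
    set w : ℕ → ℤ := fun n => (if n ∈ S then 1 else 0) - (if n ∈ T then 1 else 0) with hwdef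
    have hvals : ∀ n, w n = -1 ∨ w n = 0 ∨ w n = 1 := by
      intro n
      by_cases h1 : n ∈ S <;> by_cases h2 : n ∈ T <;> simp [hwdef, h1, h2]
    apply hw w hvals
    have hSsub : ∑ n ∈ Finset.Icc 1 M, (if n ∈ S then (1:ℚ)/(n:ℚ) else 0)
        = ∑ n ∈ S, (1:ℚ)/(n:ℚ) := by
      rw [Finset.sum_ite_mem, Finset.inter_eq_right.mpr hSmem]
    have hTsub : ∑ n ∈ Finset.Icc 1 M, (if n ∈ T then (1:ℚ)/(n:ℚ) else 0)
        = ∑ n ∈ T, (1:ℚ)/(n:ℚ) := by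
      rw [Finset.sum_ite_mem, Finset.inter_eq_right.mpr hT]
    have h1 : ∑ n ∈ Finset.Icc 1 M, (w n : ℚ) / (n : ℚ)
        = (∑ n ∈ S, (1:ℚ)/(n:ℚ)) - (∑ n ∈ T, (1:ℚ)/(n:ℚ)) := by
      rw [← hSsub, ← hTsub, ← Finset.sum_sub_distrib]
      apply Finset.sum_congr rfl
      intro n _
      by_cases ha1 : n ∈ S <;> by_cases ha2 : n ∈ T <;>
        simp [hwdef, ha1, ha2, sub_div, neg_div, one_div]
    rw [h1, hSsum, hcN]
    ring
end

section
/- For every positive integer N, |E_N| ≥ 2^{|𝒰 ∩ [1,N]|}, where 𝒰 is the set of positive integers m such that 1/m cannot be written as ∑_{n=1}^{m-1} w_n/n with w_n ∈ {-1,0,1}. -/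
/-- `N ∈ 𝒰` iff `N ≥ 1` and `∑_{n=1}^{N-1} w_n/n ≠ 1/N` for all `w_n ∈ {-1,0,1}`. -/
def memU (N : ℕ) : Prop :=
  1 ≤ N ∧ ∀ w : ℕ → ℤ, (∀ n, w n = -1 ∨ w n = 0 ∨ w n = 1) →
    ∑ n ∈ Finset.Icc 1 (N - 1), (w n : ℚ) / (n : ℚ) ≠ 1 / (N : ℚ)

lemma aux_key (N : ℕ) (S T : Finset ℕ) (m : ℕ) (hm : memU m)
    (hS : S ⊆ Finset.Icc 1 N) (hT : T ⊆ Finset.Icc 1 N)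
    (hmS : m ∈ S) (hmT : m ∉ T)
    (hhigh : ∀ n, m < n → (n ∈ S ↔ n ∈ T))
    (hsum : ∑ n ∈ S, (1:ℚ)/n = ∑ n ∈ T, (1:ℚ)/n) : False := by
  classical
  have hm1 : 1 ≤ m := hm.1
  have hmN : m ≤ N := (Finset.mem_Icc.mp (hS hmS)).2
  set g : ℕ → ℚ := fun n => (if n ∈ T then (1:ℚ)/n else 0) - (if n ∈ S then (1:ℚ)/n else 0)
    with hg
  have eS : ∑ n ∈ S, (1:ℚ)/n = ∑ n ∈ Finset.Icc 1 N, (if n ∈ S then (1:ℚ)/n else 0) := by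
    rw [Finset.sum_ite_mem, Finset.inter_eq_right.mpr hS]
  have eT : ∑ n ∈ T, (1:ℚ)/n = ∑ n ∈ Finset.Icc 1 N, (if n ∈ T then (1:ℚ)/n else 0) := by
    rw [Finset.sum_ite_mem, Finset.inter_eq_right.mpr hT]
  have hzero : ∑ n ∈ Finset.Icc 1 N, g n = 0 := by
    rw [hg, Finset.sum_sub_distrib, ← eS, ← eT, hsum, sub_self]
  -- split Icc 1 N = Ioc 0 (m-1) ∪ Ioc (m-1) N
  have hIcc : (Finset.Icc 1 N : Finset ℕ) = Finset.Ioc 0 N := by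
    ext n; simp [Nat.lt_iff_add_one_le]
  have hsplit : ∑ n ∈ Finset.Ioc 0 (m-1), g n + ∑ n ∈ Finset.Ioc (m-1) N, g n
      = ∑ n ∈ Finset.Ioc 0 N, g n :=
    Finset.sum_Ioc_consecutive _ (Nat.zero_le _) (le_trans (Nat.sub_le _ _) hmN)
  have hIoc2 : (Finset.Ioc (m-1) N : Finset ℕ) = Finset.Icc m N := by
    ext n
    simp only [Finset.mem_Ioc, Finset.mem_Icc]
    omega
  have hIocm : ∑ n ∈ Finset.Ioc m N, g n = 0 := by
    apply Finset.sum_eq_zero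
    intro n hn
    have hiff := hhigh n (Finset.mem_Ioc.mp hn).1
    by_cases h : n ∈ S
    · simp [hg, h, hiff.mp h]
    · have h' : n ∉ T := fun hh => h (hiff.mpr hh)
      simp [hg, h, h']
  have hgm : g m = -(1/m) := by simp [hg, hmS, hmT]
  have hIccm : ∑ n ∈ Finset.Icc m N, g n = -(1/m) := by
    rw [Finset.Icc_eq_cons_Ioc hmN, Finset.sum_cons, hIocm, hgm, add_zero]
  have hlow : ∑ n ∈ Finset.Ioc 0 (m-1), g n = 1/m := by
    have := hsplit
    rw [hIoc2, hIccm, ← hIcc, hzero] at this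
    linarith
  set w : ℕ → ℤ := fun n => (if n ∈ T then 1 else 0) - (if n ∈ S then 1 else 0) with hw
  apply hm.2 w
  · intro n; by_cases h1 : n ∈ T <;> by_cases h2 : n ∈ S <;> simp [hw, h1, h2]
  · have hIcc1 : (Finset.Icc 1 (m-1) : Finset ℕ) = Finset.Ioc 0 (m-1) := by
      ext n; simp [Nat.lt_iff_add_one_le]
    rw [hIcc1, ← hlow]
    apply Finset.sum_congr rfl
    intro n hn
    by_cases h1 : n ∈ T <;> by_cases h2 : n ∈ S <;> simp [hw, hg, h1, h2, neg_div, one_div]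


open scoped Classical in
theorem card_egyptianSet_ge (N : ℕ) (hN : 1 ≤ N) :
    2 ^ ((Finset.Icc 1 N).filter (fun m => memU m)).card ≤ (egyptianSet N).card := by
  classical
  set F := (Finset.Icc 1 N).filter (fun m => memU m) with hF
  have hsub : F ⊆ Finset.Icc 1 N := Finset.filter_subset _ _
  rw [← Finset.card_powerset F]
  refine Finset.card_le_card_of_injOn (fun S => ∑ n ∈ S, (1:ℚ)/n) ?_ ?_
  · intro S hS
    rw [egyptianSet, Finset.mem_coe, Finset.mem_image]
    exact ⟨S, Finset.mem_powerset.mpr ((Finset.mem_powerset.mp hS).trans hsub), rfl⟩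
  · intro S hS T hT hsum
    simp only at hsum
    by_contra hne
    have hS' : S ⊆ Finset.Icc 1 N := (Finset.mem_powerset.mp hS).trans hsub
    have hT' : T ⊆ Finset.Icc 1 N := (Finset.mem_powerset.mp hT).trans hsub
    set D : Finset ℕ := (S \ T) ∪ (T \ S) with hD
    have hDne : D.Nonempty := by
      rw [Finset.nonempty_iff_ne_empty]
      intro h
      apply hne
      ext n
      have h1 : n ∉ D := h ▸ Finset.notMem_empty n
      simp only [hD, Finset.mem_union, Finset.mem_sdiff, not_or, not_and, not_not] at h1
      constructor
      · intro hn; by_contra hn'; exact hn' (h1.1 hn)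
      · intro hn; by_contra hn'; exact hn' (h1.2 hn)
    set m := D.max' hDne with hm
    have hmD : m ∈ D := D.max'_mem hDne
    have hhigh : ∀ n, m < n → (n ∈ S ↔ n ∈ T) := by
      intro n hn
      by_contra h
      have hnD : n ∈ D := by
        simp only [hD, Finset.mem_union, Finset.mem_sdiff]
        by_cases h1 : n ∈ S
        · left; exact ⟨h1, fun h2 => h (iff_of_true h1 h2)⟩
        · right
          refine ⟨?_, h1⟩
          by_contra h2
          exact h (iff_of_false h1 h2)
      exact absurd (D.le_max' n hnD) (not_le.mpr hn)
    have hmU : memU m := by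
      have : m ∈ F := by
        simp only [hD, Finset.mem_union, Finset.mem_sdiff] at hmD
        rcases hmD with ⟨h1, _⟩ | ⟨h1, _⟩
        · exact Finset.mem_powerset.mp hS h1
        · exact Finset.mem_powerset.mp hT h1
      exact (Finset.mem_filter.mp this).2
    simp only [hD, Finset.mem_union, Finset.mem_sdiff] at hmD
    rcases hmD with ⟨h1, h2⟩ | ⟨h1, h2⟩
    · exact aux_key N S T m hmU hS' hT' h1 h2 hhigh hsum
    · exact aux_key N T S m hmU hT' hS' h1 h2 (fun n hn => (hhigh n hn).symm) hsum.symm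
end

section
/- If N ∈ 𝒰 then every positive divisor of N is in 𝒰 (the set 𝒰 is closed under taking divisors). -/
theorem memU_of_dvd (N d : ℕ) (hN : memU N) (hd : d ∣ N) (hd0 : 0 < d) : memU d := by
  obtain ⟨m, rfl⟩ := hd
  obtain ⟨hN1, hNs⟩ := hN
  have hm0 : 0 < m := by
    rcases Nat.eq_zero_or_pos m with h | h
    · simp [h] at hN1
    · exact h
  refine ⟨hd0, fun w hw hsum => ?_⟩
  set w' : ℕ → ℤ := fun k => if m ∣ k ∧ k / m ≤ d - 1 then w (k / m) else 0 with hw'def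
  have hw' : ∀ n, w' n = -1 ∨ w' n = 0 ∨ w' n = 1 := by
    intro n
    by_cases h : m ∣ n ∧ n / m ≤ d - 1
    · simpa [w', h] using hw (n / m)
    · simp [w', h]
  apply hNs w' hw'
  have hmQ : (m : ℚ) ≠ 0 := by exact_mod_cast hm0.ne'
  have hdQ : (d : ℚ) ≠ 0 := by exact_mod_cast hd0.ne'
  have hsub : ((Finset.Icc 1 (d - 1)).image (· * m)) ⊆ Finset.Icc 1 (d * m - 1) := by
    intro k hk
    simp only [Finset.mem_image, Finset.mem_Icc] at hk ⊢
    obtain ⟨n, ⟨hn1, hn2⟩, rfl⟩ := hk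
    constructor
    · exact Nat.one_le_iff_ne_zero.2 (by positivity)
    · calc n * m ≤ (d - 1) * m := Nat.mul_le_mul_right m hn2
        _ = d * m - m := by rw [Nat.sub_mul, one_mul]
        _ ≤ d * m - 1 := Nat.sub_le_sub_left hm0 _
  have key : ∑ k ∈ Finset.Icc 1 (d * m - 1), (w' k : ℚ) / (k : ℚ)
      = ∑ n ∈ Finset.Icc 1 (d - 1), (w n : ℚ) / ((n : ℚ) * m) := by
    rw [← Finset.sum_subset hsub]
    · rw [Finset.sum_image (by
        intro a _ b _ hab
        exact Nat.eq_of_mul_eq_mul_right hm0 hab)]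
      apply Finset.sum_congr rfl
      intro n hn
      simp only [Finset.mem_Icc] at hn
      have h1 : m ∣ n * m := dvd_mul_left m n
      have h2 : n * m / m = n := Nat.mul_div_cancel n hm0
      simp only [w', h1, h2, hn.2, and_self, if_true]
      push_cast
      ring
    · intro k hk hk2
      simp only [Finset.mem_Icc] at hk
      by_cases h : m ∣ k ∧ k / m ≤ d - 1
      · exfalso
        apply hk2
        simp only [Finset.mem_image, Finset.mem_Icc]
        refine ⟨k / m, ⟨?_, h.2⟩, Nat.div_mul_cancel h.1⟩
        exact Nat.one_le_div_iff hm0 |>.2 (le_trans (Nat.le_of_dvd (lt_of_lt_of_le one_pos hk.1) h.1) le_rfl)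
      · simp [w', h]
  rw [key]
  have : ∀ n ∈ Finset.Icc 1 (d - 1), (w n : ℚ) / ((n : ℚ) * m) = (w n : ℚ) / n * (1 / m) := by
    intro n hn
    rw [div_mul_eq_div_div_swap, div_div]
    ring_nf
  rw [Finset.sum_congr rfl this, ← Finset.sum_mul, hsum]
  push_cast
  field_simp
end

section
/- If m ∈ 𝒰 and p is a prime compatible with m, then m p^k ∈ 𝒰 for every positive integer k. -/
/-- A prime `p` is *compatible* with `m` if every rational of the form
`1/m - ∑_{j=1}^{m-1} w_j/j` with `w_j ∈ {-1,0,1}` is nonzero and has numerator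
not divisible by `p`. -/
def Compatible (p m : ℕ) : Prop :=
  ∀ w : ℕ → ℤ, (∀ n, w n = -1 ∨ w n = 0 ∨ w n = 1) →
    (1 / (m : ℚ) - ∑ j ∈ Finset.Icc 1 (m - 1), (w j : ℚ) / (j : ℚ)) ≠ 0 ∧
    ¬ (p : ℤ) ∣ (1 / (m : ℚ) - ∑ j ∈ Finset.Icc 1 (m - 1), (w j : ℚ) / (j : ℚ)).num

lemma padicNorm_pow_self' (p : ℕ) (hp : p.Prime) (k : ℕ) :
    padicNorm p ((p : ℚ) ^ k) = ((p : ℚ)⁻¹) ^ k := by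
  haveI : Fact p.Prime := ⟨hp⟩
  have hp1 : 1 < p := hp.one_lt
  induction k with
  | zero => simp
  | succ n ih => rw [pow_succ, padicNorm.mul, ih, pow_succ, padicNorm.padicNorm_p hp1]

theorem memU_mul_prime_pow (m p k : ℕ) (hm : memU m) (hp : p.Prime)
    (hcomp : Compatible p m) (hk : 1 ≤ k) : memU (m * p ^ k) := by
  haveI : Fact p.Prime := ⟨hp⟩
  obtain ⟨hm1, -⟩ := hm
  have hppos : 0 < p := hp.pos
  have hp1 : 1 < p := hp.one_lt
  have hpQ1 : (1 : ℚ) < (p : ℚ) := by exact_mod_cast hp1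
  have hpQ0 : (0 : ℚ) < (p : ℚ) := by positivity
  have hpk : 0 < p ^ k := pow_pos hppos k
  have hpkQ : ((p : ℚ) ^ k) ≠ 0 := by positivity
  have hNpos : 0 < m * p ^ k := Nat.mul_pos hm1 hpk
  refine ⟨hNpos, ?_⟩
  intro w hw hsum
  set N := m * p ^ k with hN
  obtain ⟨hA0, hApnum⟩ := hcomp (fun j => w (p ^ k * j)) (fun j => hw _)
  set S : ℚ := ∑ j ∈ Finset.Icc 1 (m - 1), (w (p ^ k * j) : ℚ) / (j : ℚ) with hS
  set A : ℚ := 1 / (m : ℚ) - S with hAdef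
  set R : ℚ := ∑ n ∈ (Finset.Icc 1 (N - 1)).filter (fun n => ¬ p ^ k ∣ n),
      (w n : ℚ) / (n : ℚ) with hR
  -- split the sum
  have hsplit := Finset.sum_filter_add_sum_filter_not (Finset.Icc 1 (N - 1))
      (fun n => p ^ k ∣ n) (fun n => (w n : ℚ) / (n : ℚ))
  -- reindex the divisible part
  have hdiv : ∑ n ∈ (Finset.Icc 1 (N - 1)).filter (fun n => p ^ k ∣ n),
      (w n : ℚ) / (n : ℚ) = ((p : ℚ) ^ k)⁻¹ * S := by
    have h1 : ∑ n ∈ (Finset.Icc 1 (N - 1)).filter (fun n => p ^ k ∣ n),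
        (w n : ℚ) / (n : ℚ)
        = ∑ j ∈ Finset.Icc 1 (m - 1), (w (p ^ k * j) : ℚ) / ((p ^ k * j : ℕ) : ℚ) := by
      refine Finset.sum_nbij' (i := fun n => n / p ^ k) (j := fun j => p ^ k * j)
        ?_ ?_ ?_ ?_ ?_
      · intro a ha
        simp only [Finset.mem_filter, Finset.mem_Icc] at ha
        obtain ⟨⟨ha1, ha2⟩, c, rfl⟩ := ha
        simp only [Nat.mul_div_cancel_left _ hpk]
        simp only [Finset.mem_Icc]
        constructor
        · rcases Nat.eq_zero_or_pos c with rfl | h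
          · simp at ha1
          · exact h
        · have hlt : p ^ k * c < m * p ^ k := lt_of_le_of_lt ha2 (by omega)
          have hcm : c < m := by nlinarith
          omega
      · intro j hj
        simp only [Finset.mem_Icc] at hj
        simp only [Finset.mem_filter, Finset.mem_Icc]
        refine ⟨⟨?_, ?_⟩, ⟨j, rfl⟩⟩
        · have h0 := hj.1
          exact Nat.one_le_iff_ne_zero.2 (Nat.mul_ne_zero hpk.ne' (by omega))
        · obtain ⟨m', rfl⟩ : ∃ m', m = m' + 1 := ⟨m - 1, by omega⟩
          have h1 : p ^ k * j ≤ p ^ k * m' := Nat.mul_le_mul_left _ (by omega)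
          have h2 : N = p ^ k * m' + p ^ k := by rw [hN]; ring
          omega
      · intro a ha
        simp only [Finset.mem_filter] at ha
        obtain ⟨-, c, rfl⟩ := ha
        simp only [Nat.mul_div_cancel_left _ hpk]
      · intro j hj
        simp only [Nat.mul_div_cancel_left _ hpk]
      · intro a ha
        simp only [Finset.mem_filter] at ha
        obtain ⟨-, c, rfl⟩ := ha
        simp only [Nat.mul_div_cancel_left _ hpk]
    rw [h1, hS, Finset.mul_sum]
    refine Finset.sum_congr rfl fun j hj => ?_
    push_cast
    rw [div_mul_eq_div_div_swap, div_eq_inv_mul]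
  -- the key equation
  have hEq : ((p : ℚ) ^ k)⁻¹ * S + R = 1 / ((m : ℚ) * (p : ℚ) ^ k) := by
    rw [← hdiv, hR, hsplit, hsum, hN]
    push_cast
    ring
  have hmQ : (m : ℚ) ≠ 0 := by
    have : (0 : ℚ) < (m : ℚ) := by exact_mod_cast hm1
    exact this.ne'
  have hAR : A = (p : ℚ) ^ k * R := by
    have h1 : (p : ℚ) ^ k * (((p : ℚ) ^ k)⁻¹ * S + R)
        = (p : ℚ) ^ k * (1 / ((m : ℚ) * (p : ℚ) ^ k)) := by rw [hEq]
    rw [mul_add, ← mul_assoc, mul_inv_cancel₀ hpkQ, one_mul] at h1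
    have h2 : (p : ℚ) ^ k * (1 / ((m : ℚ) * (p : ℚ) ^ k)) = 1 / (m : ℚ) := by
      field_simp
    rw [h2] at h1
    rw [hAdef]
    linarith
  -- norm of A is at least 1
  have hAnorm : 1 ≤ padicNorm p A := by
    have hden0 : (A.den : ℚ) ≠ 0 := by
      exact_mod_cast A.den_nz
    have h1 : padicNorm p (A.num : ℚ) = 1 := (padicNorm.int_eq_one_iff _).2 hApnum
    have h2 : padicNorm p (A.den : ℚ) ≤ 1 := padicNorm.of_nat _
    have h3 : 0 < padicNorm p (A.den : ℚ) :=
      lt_of_le_of_ne (padicNorm.nonneg _) (Ne.symm (padicNorm.nonzero hden0))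
    calc (1 : ℚ)
        = padicNorm p (A.num : ℚ) / padicNorm p (A.den : ℚ) * padicNorm p (A.den : ℚ) := by
          field_simp [h1]
          exact h1.symm
      _ ≤ padicNorm p (A.num : ℚ) / padicNorm p (A.den : ℚ) * 1 := by
          apply mul_le_mul_of_nonneg_left h2
          rw [h1]
          positivity
      _ = padicNorm p A := by
          rw [mul_one, ← padicNorm.div, Rat.num_div_den]
  -- norm of R is at most p^(k-1)
  have hRnorm : padicNorm p R ≤ (p : ℚ) ^ ((k : ℤ) - 1) := by
    rw [hR]
    refine padicNorm.sum_le' (fun n hn => ?_) (by positivity)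
    simp only [Finset.mem_filter, Finset.mem_Icc] at hn
    obtain ⟨⟨hn1, -⟩, hnd⟩ := hn
    have hn0Q : ((n : ℚ)) ≠ 0 := by positivity
    have hnormn_pos : 0 < padicNorm p (n : ℚ) :=
      lt_of_le_of_ne (padicNorm.nonneg _) (Ne.symm (padicNorm.nonzero hn0Q))
    have hgt : (p : ℚ) ^ (-(k : ℤ)) < padicNorm p (n : ℚ) := by
      by_contra hle
      push_neg at hle
      apply hnd
      have hle' : padicNorm p ((n : ℤ) : ℚ) ≤ (p : ℚ) ^ (-(k : ℤ)) := by
        push_cast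
        exact hle
      have hdvd : ((p ^ k : ℕ) : ℤ) ∣ (n : ℤ) := padicNorm.dvd_iff_norm_le.mpr hle'
      exact_mod_cast hdvd
    obtain ⟨z, hz⟩ := padicNorm.values_discrete (p := p) hn0Q
    rw [hz] at hgt
    have hzk : -(k : ℤ) < -z := (zpow_lt_zpow_iff_right₀ hpQ1).1 hgt
    have hzle : z ≤ (k : ℤ) - 1 := by omega
    calc padicNorm p ((w n : ℚ) / (n : ℚ))
        = padicNorm p (w n : ℚ) / padicNorm p (n : ℚ) := padicNorm.div _ _
      _ ≤ 1 / padicNorm p (n : ℚ) := by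
          gcongr
          exact padicNorm.of_int _
      _ = (p : ℚ) ^ z := by rw [hz, one_div, ← zpow_neg, neg_neg]
      _ ≤ (p : ℚ) ^ ((k : ℤ) - 1) := (zpow_le_zpow_iff_right₀ hpQ1).2 hzle
  -- combine
  have hpow : padicNorm p ((p : ℚ) ^ k) = ((p : ℚ)⁻¹) ^ k :=
    padicNorm_pow_self' p hp k
  have hfin : padicNorm p A ≤ (p : ℚ)⁻¹ := by
    rw [hAR, padicNorm.mul, hpow]
    calc ((p : ℚ)⁻¹) ^ k * padicNorm p R
        ≤ ((p : ℚ)⁻¹) ^ k * (p : ℚ) ^ ((k : ℤ) - 1) :=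
          mul_le_mul_of_nonneg_left hRnorm (by positivity)
      _ = (p : ℚ)⁻¹ := by
          rw [inv_pow, ← zpow_natCast ((p : ℚ)) k, ← zpow_neg, ← zpow_add₀ hpQ0.ne']
          have he : (-(k : ℤ) + ((k : ℤ) - 1)) = -1 := by ring
          rw [he, zpow_neg_one]
  have : (p : ℚ)⁻¹ < 1 := by
    rw [inv_lt_one_iff₀]
    right
    exact hpQ1
  linarith
end

section
/- If m ∈ 𝒰 and p is a prime with p > g_m := lcm(1,…,m) · ∑_{j=1}^m 1/j, then m p^k ∈ 𝒰 for every positive integer k. -/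
theorem memU_mul_prime_pow_of_gt (m p k : ℕ) (hm : memU m) (hp : p.Prime) (hk : 1 ≤ k)
    (hpg : (((Finset.Icc 1 m).lcm id : ℕ) : ℚ) * ∑ j ∈ Finset.Icc 1 m, (1 : ℚ) / (j : ℚ)
      < (p : ℚ)) :
    memU (m * p ^ k) := by
  obtain ⟨hm1, hmU⟩ := hm
  have hp0 : 0 < p := hp.pos
  have hpk0 : 0 < p ^ k := pow_pos hp0 k
  have hN1 : 1 ≤ m * p ^ k := Nat.one_le_iff_ne_zero.mpr (by positivity)
  refine ⟨hN1, ?_⟩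
  intro w hw heq
  set d : ℕ := (Finset.Icc 1 m).lcm id with hd
  have hdvd : ∀ t ∈ Finset.Icc 1 m, t ∣ d := fun t ht => Finset.dvd_lcm ht
  have hddvd : d ∣ m.factorial := Finset.lcm_dvd fun t ht =>
    Nat.dvd_factorial (Finset.mem_Icc.mp ht).1 (Finset.mem_Icc.mp ht).2
  have hd0 : 0 < d := by
    rcases Nat.eq_zero_or_pos d with h | h
    · exfalso
      have := Nat.eq_zero_of_zero_dvd (h ▸ hddvd)
      exact (Nat.factorial_pos m).ne' this
    · exact h
  -- m < p
  have hsum1 : (1:ℚ) ≤ ∑ j ∈ Finset.Icc 1 m, (1:ℚ)/j := by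
    have h1 : (1:ℕ) ∈ Finset.Icc 1 m := Finset.mem_Icc.mpr ⟨le_refl 1, hm1⟩
    have := Finset.single_le_sum (f := fun j : ℕ => (1:ℚ)/j)
      (fun i _ => by positivity) h1
    simpa using this
  have hmd : (m:ℚ) ≤ d := by
    exact_mod_cast Nat.le_of_dvd hd0 (hdvd m (Finset.mem_Icc.mpr ⟨hm1, le_refl m⟩))
  have hmp : m < p := by
    have : (m:ℚ) < p := by
      calc (m:ℚ) ≤ d := hmd
        _ = (d:ℚ) * 1 := by ring
        _ ≤ (d:ℚ) * ∑ j ∈ Finset.Icc 1 m, (1:ℚ)/j := by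
            apply mul_le_mul_of_nonneg_left hsum1 (by positivity)
        _ < p := hpg
    exact_mod_cast this
  have hpd : ¬ p ∣ d := fun h =>
    absurd ((Nat.Prime.dvd_factorial hp).mp (h.trans hddvd)) (Nat.not_le.mpr hmp)
  -- split the sum
  set s := Finset.Icc 1 (m * p ^ k - 1) with hs
  set A := s.filter (fun n => p ^ k ∣ n) with hA
  set B := s.filter (fun n => ¬ p ^ k ∣ n) with hB
  have hsplit : ∑ n ∈ s, (w n : ℚ)/(n:ℚ)
      = ∑ n ∈ A, (w n:ℚ)/(n:ℚ) + ∑ n ∈ B, (w n:ℚ)/(n:ℚ) :=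
    (Finset.sum_filter_add_sum_filter_not s _ _).symm
  have hAim : A = (Finset.Icc 1 (m-1)).image (fun t => p ^ k * t) := by
    ext n
    simp only [hA, hs, Finset.mem_filter, Finset.mem_Icc, Finset.mem_image]
    constructor
    · rintro ⟨⟨h1, h2⟩, t, rfl⟩
      refine ⟨t, ⟨?_, ?_⟩, rfl⟩
      · rcases Nat.eq_zero_or_pos t with rfl | h
        · simp at h1
        · exact h
      · have h3 : p ^ k * t < m * p ^ k :=
          lt_of_le_of_lt h2 (Nat.sub_lt (by positivity) one_pos)
        have h4 : t < m := by
          rw [mul_comm m] at h3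
          exact Nat.lt_of_mul_lt_mul_left h3
        omega
    · rintro ⟨t, ⟨ht1, ht2⟩, rfl⟩
      have hm' : m - 1 + 1 = m := by omega
      have h3 : p ^ k * t ≤ p ^ k * (m - 1) := Nat.mul_le_mul_left _ ht2
      have h4 : p ^ k * m = p ^ k * (m - 1) + p ^ k := by
        nth_rewrite 1 [← hm']
        ring
      have h5 : m * p ^ k = p ^ k * m := Nat.mul_comm _ _
      refine ⟨⟨Nat.mul_pos hpk0 (by omega), by omega⟩, ⟨t, rfl⟩⟩
  have hinj : Set.InjOn (fun t => p ^ k * t) (Finset.Icc 1 (m-1)) := by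
    intro a _ b _ hab
    exact Nat.eq_of_mul_eq_mul_left hpk0 hab
  set T : ℚ := ∑ t ∈ Finset.Icc 1 (m-1), (w (p^k*t):ℚ)/(t:ℚ) with hT
  set S : ℚ := ∑ n ∈ B, (w n:ℚ)/(n:ℚ) with hS
  have hpkQ : ((p:ℚ))^k ≠ 0 := by positivity
  have hmQ : (m:ℚ) ≠ 0 := Nat.cast_ne_zero.mpr (by omega)
  have hAsum : ∑ n ∈ A, (w n:ℚ)/(n:ℚ) = T / (p:ℚ)^k := by
    rw [hAim, Finset.sum_image hinj, hT, Finset.sum_div]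
    apply Finset.sum_congr rfl
    intro t ht
    have ht1 : 1 ≤ t := (Finset.mem_Icc.mp ht).1
    have htQ : (t:ℚ) ≠ 0 := Nat.cast_ne_zero.mpr (by omega)
    push_cast
    field_simp
  -- main equation: T / p^k + S = 1/(m p^k)
  have heq2 : T / (p:ℚ)^k + S = 1/((m:ℚ) * (p:ℚ)^k) := by
    rw [← hAsum, hS, ← hsplit]
    convert heq using 2
    push_cast
    ring
  have hXS : (p:ℚ)^k * S = 1/(m:ℚ) - T := by
    field_simp at heq2
    have hmp0 : (m:ℚ)*(p:ℚ)^k ≠ 0 := mul_ne_zero hmQ hpkQ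
    apply mul_right_cancel₀ hmp0
    calc (p:ℚ)^k * S * ((m:ℚ)*(p:ℚ)^k)
        = (T + S*(p:ℚ)^k) * ((m:ℚ)*(p:ℚ)^k) - T * ((m:ℚ)*(p:ℚ)^k) := by ring
      _ = (p:ℚ)^k - T*((m:ℚ)*(p:ℚ)^k) := by linear_combination ((p:ℚ)^k) * heq2
      _ = (1/(m:ℚ) - T) * ((m:ℚ)*(p:ℚ)^k) := by
          field_simp
  -- m ∈ U gives T ≠ 1/m
  have hTne : T ≠ 1/(m:ℚ) := hmU (fun t => w (p^k * t)) (fun n => hw _)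
  have hXne : (1:ℚ)/(m:ℚ) - T ≠ 0 := sub_ne_zero.mpr (Ne.symm hTne)
  -- the integer z
  set z : ℤ := ((d/m : ℕ) : ℤ) - ∑ t ∈ Finset.Icc 1 (m-1), w (p^k*t) * ((d/t : ℕ):ℤ) with hz
  have hcastdm : ((d/m : ℕ) : ℚ) = (d:ℚ)/(m:ℚ) :=
    Nat.cast_div (hdvd m (Finset.mem_Icc.mpr ⟨hm1, le_refl m⟩)) hmQ
  have hcastdt : ∀ t ∈ Finset.Icc 1 (m-1), ((d/t : ℕ) : ℚ) = (d:ℚ)/(t:ℚ) := by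
    intro t ht
    have h := Finset.mem_Icc.mp ht
    exact Nat.cast_div (hdvd t (Finset.mem_Icc.mpr ⟨h.1, by omega⟩))
      (Nat.cast_ne_zero.mpr (by omega))
  have hzQ : (z:ℚ) = (d:ℚ) * (1/(m:ℚ) - T) := by
    rw [hz, Int.cast_sub, Int.cast_natCast, Int.cast_sum]
    rw [hcastdm, hT, mul_sub, Finset.mul_sum]
    congr 1
    · field_simp
    · apply Finset.sum_congr rfl
      intro t ht
      rw [Int.cast_mul, Int.cast_natCast, hcastdt t ht]
      ring
  have hz0 : z ≠ 0 := by
    intro h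
    rw [h] at hzQ
    have : (d:ℚ) ≠ 0 := Nat.cast_ne_zero.mpr hd0.ne'
    exact hXne (by
      rcases mul_eq_zero.mp hzQ.symm with h' | h'
      · exact absurd h' this
      · exact h')
  -- bound |z| ≤ d * harmonic sum
  have habs : |(z:ℚ)| ≤ (d:ℚ) * ∑ j ∈ Finset.Icc 1 m, (1:ℚ)/j := by
    rw [hzQ, abs_mul, Nat.abs_cast]
    have hTabs : |1/(m:ℚ) - T| ≤ ∑ j ∈ Finset.Icc 1 m, (1:ℚ)/j := by
      have h1 : |1/(m:ℚ) - T| ≤ 1/(m:ℚ) + |T| := by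
        calc |1/(m:ℚ) - T| ≤ |1/(m:ℚ)| + |T| := abs_sub _ _
          _ = 1/(m:ℚ) + |T| := by rw [abs_of_nonneg (by positivity)]
      have h2 : |T| ≤ ∑ t ∈ Finset.Icc 1 (m-1), (1:ℚ)/t := by
        calc |T| ≤ ∑ t ∈ Finset.Icc 1 (m-1), |(w (p^k*t):ℚ)/(t:ℚ)| :=
              Finset.abs_sum_le_sum_abs _ _
          _ ≤ ∑ t ∈ Finset.Icc 1 (m-1), (1:ℚ)/t := by
              apply Finset.sum_le_sum
              intro t ht
              have ht0 : (0:ℚ) < (t:ℚ) := by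
                have := (Finset.mem_Icc.mp ht).1
                exact_mod_cast Nat.lt_of_lt_of_le Nat.zero_lt_one this
              rw [abs_div, Nat.abs_cast]
              refine (div_le_div_iff_of_pos_right ht0).mpr ?_
              rcases hw (p^k*t) with h | h | h <;> rw [h] <;> norm_num
      have h3 : ∑ j ∈ Finset.Icc 1 m, (1:ℚ)/j
          = (∑ t ∈ Finset.Icc 1 (m-1), (1:ℚ)/t) + 1/(m:ℚ) := by
        have hm' : m - 1 + 1 = m := by omega
        rw [← hm', Finset.sum_Icc_succ_top (by omega), hm']
      rw [h3]
      linarith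
    exact mul_le_mul_of_nonneg_left hTabs (by positivity)
  have habslt : |(z:ℚ)| < p := lt_of_le_of_lt habs hpg
  -- divisibility by p
  set Q : ℕ := ∏ n ∈ B, (n / p ^ (n.factorization p)) with hQ
  have hBmem : ∀ n ∈ B, 1 ≤ n ∧ ¬ p ^ k ∣ n := by
    intro n hn
    have := Finset.mem_filter.mp hn
    exact ⟨(Finset.mem_Icc.mp this.1).1, this.2⟩
  have hQdvd : ∀ n ∈ B, n ∣ Q * p^(k-1) := by
    intro n hn
    obtain ⟨hn1, hnk⟩ := hBmem n hn
    have hn0 : n ≠ 0 := by omega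
    have he : n.factorization p ≤ k - 1 := by
      by_contra h
      push_neg at h
      have : k ≤ n.factorization p := by omega
      exact hnk ((pow_dvd_pow p this).trans (Nat.ordProj_dvd n p))
    have h1 : p ^ (n.factorization p) ∣ p ^ (k-1) := pow_dvd_pow p he
    have h2 : n / p ^ (n.factorization p) ∣ Q := Finset.dvd_prod_of_mem _ hn
    calc n = (n / p ^ (n.factorization p)) * p ^ (n.factorization p) := by
          rw [mul_comm]
          exact (Nat.ordProj_mul_ordCompl_eq_self n p).symm
      _ ∣ Q * p^(k-1) := mul_dvd_mul h2 h1
  have hpQ : ¬ p ∣ Q := by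
    intro h
    rw [hQ] at h
    obtain ⟨n, hn, hpn⟩ := (hp.prime.dvd_finset_prod_iff _).mp h
    exact Nat.not_dvd_ordCompl hp (by have := (hBmem n hn).1; omega) hpn
  set y : ℤ := ∑ n ∈ B, w n * ((Q * p^(k-1) / n : ℕ) : ℤ) with hy
  have hyQ : (y:ℚ) = (Q:ℚ) * (p:ℚ)^(k-1) * S := by
    rw [hy, hS, Finset.mul_sum, Int.cast_sum]
    apply Finset.sum_congr rfl
    intro n hn
    have hn1 := (hBmem n hn).1
    have hnQ : (n:ℚ) ≠ 0 := Nat.cast_ne_zero.mpr (by omega)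
    rw [Int.cast_mul, Int.cast_natCast, Nat.cast_div (hQdvd n hn) hnQ]
    push_cast
    field_simp
  -- key identity over ℚ, then ℤ
  have hkey : (Q:ℤ) * z = (p:ℤ) * ((d:ℤ) * y) := by
    have hQzQ : ((Q:ℤ) * z : ℤ) = ((p:ℤ) * ((d:ℤ) * y) : ℤ) := by
      have hQQ : ((Q:ℚ)) * (z:ℚ) = (p:ℚ) * ((d:ℚ) * (y:ℚ)) := by
        rw [hzQ, hyQ, ← hXS]
        have hpk : (p:ℚ)^k = (p:ℚ) * (p:ℚ)^(k-1) := by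
          rw [← pow_succ']
          congr 1
          omega
        rw [hpk]
        ring
      exact_mod_cast hQQ
    exact hQzQ
  have hpz : (p:ℤ) ∣ z := by
    have hdvdQz : (p:ℤ) ∣ (Q:ℤ) * z := ⟨(d:ℤ) * y, hkey⟩
    rcases (Nat.prime_iff_prime_int.mp hp).dvd_mul.mp hdvdQz with h | h
    · exact absurd (Int.natCast_dvd_natCast.mp h) hpQ
    · exact h
  have hple : (p:ℤ) ≤ |z| := Int.le_of_dvd (abs_pos.mpr hz0) ((dvd_abs _ _).mpr hpz)
  have : (p:ℚ) ≤ |(z:ℚ)| := by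
    rw [← Int.cast_abs]
    exact_mod_cast hple
  linarith
end

section
/- Every prime power p^k (p prime, k ≥ 1) belongs to 𝒰; that is, 1/p^k cannot be written as ∑_{n=1}^{p^k-1} w_n/n with w_n ∈ {-1,0,1}. -/
theorem memU_prime_pow (p k : ℕ) (hp : p.Prime) (hk : 1 ≤ k) : memU (p ^ k) := by
  haveI : Fact p.Prime := ⟨hp⟩
  have hp1 : (1 : ℚ) < p := by exact_mod_cast hp.one_lt
  have hp0 : (0 : ℚ) < p := lt_trans one_pos hp1
  refine ⟨Nat.one_le_pow _ _ hp.pos, fun w hw hsum => ?_⟩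
  -- norm of RHS
  have hRHS : padicNorm p (1 / (p ^ k : ℕ) : ℚ) = (p : ℚ) ^ (k : ℤ) := by
    have hne : ((p ^ k : ℕ) : ℚ) ≠ 0 := by
      exact_mod_cast (Nat.one_le_pow _ _ hp.pos).trans_lt' Nat.zero_lt_one |>.ne'
    rw [padicNorm.div, padicNorm.one, padicNorm.eq_zpow_of_nonzero hne]
    have : padicValRat p ((p ^ k : ℕ) : ℚ) = (k : ℤ) := by
      push_cast
      rw [padicValRat.pow]
      simp [padicValRat.self hp.one_lt]
    rw [this, one_div, ← zpow_neg, neg_neg]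
  -- norm of LHS is < p^k
  have hLHS : padicNorm p (∑ n ∈ Finset.Icc 1 (p ^ k - 1), (w n : ℚ) / (n : ℚ))
      < (p : ℚ) ^ (k : ℤ) := by
    apply padicNorm.sum_lt'
    · intro n hn
      simp only [Finset.mem_Icc] at hn
      have hn0 : 0 < n := hn.1
      have hnlt : n < p ^ k := by
        have := hn.2
        have h1 : 1 ≤ p ^ k := Nat.one_le_pow _ _ hp.pos
        omega
      have hnne : (n : ℚ) ≠ 0 := by exact_mod_cast hn0.ne'
      -- valuation of n is < k
      have hv : padicValNat p n < k := by
        by_contra h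
        push_neg at h
        have : p ^ k ∣ n := (pow_dvd_pow p h).trans pow_padicValNat_dvd
        exact absurd (Nat.le_of_dvd hn0 this) (not_le.2 hnlt)
      have hninv : padicNorm p ((n : ℚ))⁻¹ < (p : ℚ) ^ (k : ℤ) := by
        rw [padicNorm.eq_zpow_of_nonzero (inv_ne_zero hnne),
          padicValRat.inv, neg_neg]
        have : padicValRat p (n : ℚ) = (padicValNat p n : ℤ) := by
          simp [padicValRat.of_nat]
        rw [this]
        exact zpow_lt_zpow_right₀ hp1 (by exact_mod_cast hv)
      rcases hw n with h | h | h
      · rw [h]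
        push_cast
        rw [neg_div, padicNorm.neg, one_div]
        exact hninv
      · rw [h]
        simpa using zpow_pos hp0 (k : ℤ)
      · rw [h]
        push_cast
        rw [one_div]
        exact hninv
    · exact zpow_pos hp0 (k : ℤ)
  rw [hsum] at hLHS
  rw [hRHS] at hLHS
  exact lt_irrefl _ hLHS
end

section
/- Define h_1 := 1, h_k := e^{h_{k−1}} + 1/4, and T_1(z) := ln z for z > h_1 (0 otherwise), T_k(z) := ∫_{h_{k−1}}^{ln(z−1/4)} T_{k−1}(w) dw for z > h_k (0 otherwise). If for some k ≥ 3 and constant a_{k−1} ≥ 1 one has T_{k−1}(z) ≥ ∏_{j=1}^{k−1} ln_j z − a_{k−1} ∏_{j=1}^{k−2} ln_j z for all z ≥ e_{k−1}, then T_k(z) ≥ ∏_{j=1}^{k} ln_j z − a_k ∏_{j=1}^{k−1} ln_j z for all z ≥ e_k, where a_k := a_{k−1} + 1/e_{k−2} + (k−2)/(e_{k−2} e_{k−3}). -/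
open Real Finset

/-- `etower k` is the tower of `k` exponentials in `e`: `e_0 = 1`, `e_k = e^{e_{k-1}}`. -/
noncomputable def etower : ℕ → ℝ
  | 0 => 1
  | k + 1 => Real.exp (etower k)

lemma etower_succ (n : ℕ) : etower (n + 1) = Real.exp (etower n) := rfl

lemma one_le_etower : ∀ n, 1 ≤ etower n
  | 0 => le_refl 1
  | n + 1 => by
    have := one_le_etower n
    have := Real.add_one_le_exp (etower n)
    rw [etower_succ]; linarith

lemma etower_pos (n : ℕ) : 0 < etower n := lt_of_lt_of_le one_pos (one_le_etower n)

lemma etower_le_succ (n : ℕ) : etower n ≤ etower (n + 1) := by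
  have := Real.add_one_le_exp (etower n)
  rw [etower_succ]; linarith

lemma etower_mono {n m : ℕ} (h : n ≤ m) : etower n ≤ etower m := by
  induction m with
  | zero => simp_all
  | succ m ih =>
    rcases Nat.lt_or_ge n (m + 1) with h' | h'
    · exact le_trans (ih (Nat.lt_succ_iff.mp h')) (etower_le_succ m)
    · have : n = m + 1 := le_antisymm h h'
      simp [this]

lemma nat_add_one_le_etower : ∀ n : ℕ, (n : ℝ) + 1 ≤ etower n
  | 0 => by norm_num [etower]
  | n + 1 => by
    have h1 := nat_add_one_le_etower n
    have h2 := Real.add_one_le_exp (etower n)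
    rw [etower_succ]; push_cast; linarith

/-! iterated log -/

lemma iterlog_tower : ∀ (j n : ℕ), Real.log^[j] (etower (j + n)) = etower n
  | 0, n => by simp
  | j + 1, n => by
    rw [Function.iterate_succ_apply, show j + 1 + n = (j + n) + 1 by omega,
      etower_succ, Real.log_exp]
    exact iterlog_tower j n

lemma iterlog_tower_self (j : ℕ) : Real.log^[j] (etower j) = 1 := by
  simpa [etower] using iterlog_tower j 0

lemma le_iterlog : ∀ (j n : ℕ) (x : ℝ), etower (j + n) ≤ x → etower n ≤ Real.log^[j] x
  | 0, n, x, h => by simpa using h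
  | j + 1, n, x, h => by
    rw [Function.iterate_succ_apply]
    have h1 : etower (j + n) ≤ Real.log x := by
      have : etower ((j + n) + 1) ≤ x := by rwa [show (j + n) + 1 = j + 1 + n by omega]
      calc etower (j + n) = Real.log (etower ((j + n) + 1)) := by
            rw [etower_succ, Real.log_exp]
        _ ≤ Real.log x := Real.log_le_log (etower_pos _) this
    exact le_iterlog j n _ h1

lemma one_le_iterlog {j : ℕ} {x : ℝ} (h : etower j ≤ x) : 1 ≤ Real.log^[j] x := by
  have := le_iterlog j 0 x (by simpa using h)
  simpa [etower] using this

lemma iterlog_pos {j : ℕ} {x : ℝ} (h : etower j ≤ x) : 0 < Real.log^[j] x :=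
  lt_of_lt_of_le one_pos (one_le_iterlog h)

lemma iterlog_le_iterlog : ∀ (j : ℕ) {x y : ℝ}, etower j ≤ x → x ≤ y →
    Real.log^[j] x ≤ Real.log^[j] y
  | 0, x, y, _, hxy => hxy
  | j + 1, x, y, hx, hxy => by
    rw [Function.iterate_succ_apply, Function.iterate_succ_apply]
    have hx0 : 0 < x := lt_of_lt_of_le (etower_pos _) hx
    have h1 : etower j ≤ Real.log x := by
      calc etower j = Real.log (etower (j + 1)) := by rw [etower_succ, Real.log_exp]
        _ ≤ Real.log x := Real.log_le_log (etower_pos _) hx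
    exact iterlog_le_iterlog j h1 (Real.log_le_log hx0 hxy)

lemma iterlog_lip : ∀ (j : ℕ) {x y : ℝ}, etower j ≤ x → x ≤ y →
    Real.log^[j] y ≤ Real.log^[j] x + (y - x)
  | 0, x, y, _, _ => by simp
  | j + 1, x, y, hx, hxy => by
    rw [Function.iterate_succ_apply, Function.iterate_succ_apply]
    have hx1 : 1 ≤ x := le_trans (one_le_etower _) hx
    have hx0 : 0 < x := by linarith
    have hlx : etower j ≤ Real.log x := by
      calc etower j = Real.log (etower (j + 1)) := by rw [etower_succ, Real.log_exp]
        _ ≤ Real.log x := Real.log_le_log (etower_pos _) hx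
    have hlog : Real.log y ≤ Real.log x + (y - x) := by
      have hyx : 0 < y / x := div_pos (by linarith) hx0
      have := Real.log_le_sub_one_of_pos hyx
      rw [Real.log_div (by linarith) (ne_of_gt hx0)] at this
      have hdiv : y / x - 1 ≤ y - x := by
        rw [div_sub_one (ne_of_gt hx0)]
        rw [div_le_iff₀ hx0]
        nlinarith
      linarith
    have hly : etower j ≤ Real.log y :=
      le_trans hlx (Real.log_le_log hx0 hxy)
    calc Real.log^[j] (Real.log y) ≤ Real.log^[j] (Real.log x + (y - x)) :=
          iterlog_le_iterlog j hly hlog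
      _ ≤ Real.log^[j] (Real.log x) + (Real.log x + (y - x) - Real.log x) :=
          iterlog_lip j hlx (by linarith)
      _ = Real.log^[j] (Real.log x) + (y - x) := by ring_nf

lemma iterlog_le_self : ∀ (j : ℕ) {x : ℝ}, etower j ≤ x → Real.log^[j] x ≤ x
  | 0, x, _ => le_refl x
  | j + 1, x, hx => by
    rw [Function.iterate_succ_apply]
    have hx0 : 0 < x := lt_of_lt_of_le (etower_pos _) hx
    have hlx : etower j ≤ Real.log x := by
      calc etower j = Real.log (etower (j + 1)) := by rw [etower_succ, Real.log_exp]
        _ ≤ Real.log x := Real.log_le_log (etower_pos _) hx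
    have h1 : Real.log x ≤ x - 1 := Real.log_le_sub_one_of_pos hx0
    exact le_trans (iterlog_le_self j hlx) (by linarith)

/-- key shrink lemma: `log^[n] y * e_n ≤ y` for `y ≥ e_n`. -/
lemma iterlog_mul_etower_le : ∀ (n : ℕ) {y : ℝ}, etower n ≤ y →
    Real.log^[n] y * etower n ≤ y
  | 0, y, _ => by simp [etower]
  | n + 1, y, hy => by
    rw [Function.iterate_succ_apply]
    have hy0 : 0 < y := lt_of_lt_of_le (etower_pos _) hy
    have hlx : etower n ≤ Real.log y := by
      calc etower n = Real.log (etower (n + 1)) := by rw [etower_succ, Real.log_exp]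
        _ ≤ Real.log y := Real.log_le_log (etower_pos _) hy
    have ih := iterlog_mul_etower_le n hlx
    -- log y * e_{n+1} ≤ y * e_n, since y = exp (log y)
    have key : Real.log y * etower (n + 1) ≤ y * etower n := by
      set t := Real.log y with ht
      have hyt : y = Real.exp t := (Real.exp_log hy0).symm
      have he : 1 ≤ etower n := one_le_etower n
      have h2 : (t - etower n) + 1 ≤ Real.exp (t - etower n) := Real.add_one_le_exp _
      have h3 : t ≤ etower n * Real.exp (t - etower n) := by
        nlinarith [Real.exp_pos (t - etower n)]
      calc t * etower (n + 1) = t * Real.exp (etower n) := by rw [etower_succ]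
        _ ≤ etower n * Real.exp (t - etower n) * Real.exp (etower n) := by
            nlinarith [Real.exp_pos (etower n)]
        _ = Real.exp t * etower n := by
            rw [show etower n * Real.exp (t - etower n) * Real.exp (etower n)
                = Real.exp (t - etower n) * Real.exp (etower n) * etower n by ring,
              ← Real.exp_add]
            ring_nf
        _ = y * etower n := by rw [← hyt]
    have hpos : 0 < etower n := etower_pos n
    have hh : Real.log^[n] (Real.log y) * etower (n + 1) ≤ Real.log y * etower (n + 1) / etower n := by
      rw [le_div_iff₀ hpos]
      have h5 : Real.log^[n] (Real.log y) * etower n ≤ Real.log y := ih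
      have : 0 < etower (n + 1) := etower_pos _
      nlinarith
    calc Real.log^[n] (Real.log y) * etower (n + 1)
        ≤ Real.log y * etower (n + 1) / etower n := hh
      _ ≤ y := by rw [div_le_iff₀ hpos]; nlinarith

/-! products of iterated logs -/

noncomputable def Pprod (m : ℕ) (x : ℝ) : ℝ := ∏ j ∈ Finset.Icc 1 m, Real.log^[j] x

lemma Pprod_zero (x : ℝ) : Pprod 0 x = 1 := by simp [Pprod]

lemma Pprod_succ (m : ℕ) (x : ℝ) : Pprod (m + 1) x = Pprod m x * Real.log^[m + 1] x := by
  simpa [Pprod] using Finset.prod_Icc_succ_top (Nat.le_add_left 1 m) (fun j => Real.log^[j] x)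

lemma Pprod_shift : ∀ (m : ℕ) (y : ℝ), Pprod (m + 1) y = Real.log y * Pprod m (Real.log y)
  | 0, y => by simp [Pprod]
  | m + 1, y => by
    rw [Pprod_succ (m + 1) y, Pprod_shift m y, Pprod_succ m (Real.log y),
      Function.iterate_succ_apply]
    ring

lemma one_le_prod_real {s : Finset ℕ} {f : ℕ → ℝ} (h : ∀ j ∈ s, 1 ≤ f j) :
    1 ≤ ∏ j ∈ s, f j := by
  calc (1:ℝ) = ∏ _j ∈ s, (1:ℝ) := by simp
    _ ≤ ∏ j ∈ s, f j := Finset.prod_le_prod (by intros; norm_num) h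

lemma prod_le_prod_subset_real {s t : Finset ℕ} {f : ℕ → ℝ} (hst : s ⊆ t)
    (h : ∀ j ∈ t, 1 ≤ f j) : ∏ j ∈ s, f j ≤ ∏ j ∈ t, f j := by
  rw [← Finset.prod_sdiff hst]
  have h1 : 1 ≤ ∏ j ∈ t \ s, f j :=
    one_le_prod_real (fun j hj => h j (Finset.mem_sdiff.mp hj).1)
  have h2 : 0 ≤ ∏ j ∈ s, f j :=
    le_trans zero_le_one (one_le_prod_real (fun j hj => h j (hst hj)))
  nlinarith

lemma one_le_Pprod {m : ℕ} {x : ℝ} (h : etower m ≤ x) : 1 ≤ Pprod m x := by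
  unfold Pprod
  calc (1:ℝ) = ∏ _j ∈ Finset.Icc 1 m, (1:ℝ) := by simp
    _ ≤ ∏ j ∈ Finset.Icc 1 m, Real.log^[j] x := by
      apply Finset.prod_le_prod (by intros; norm_num)
      intro j hj
      exact one_le_iterlog (le_trans (etower_mono (Finset.mem_Icc.mp hj).2) h)

lemma Pprod_nonneg {m : ℕ} {x : ℝ} (h : etower m ≤ x) : 0 ≤ Pprod m x :=
  le_trans zero_le_one (one_le_Pprod h)

lemma Pprod_le_Pprod {m : ℕ} {x y : ℝ} (h : etower m ≤ x) (hxy : x ≤ y) :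
    Pprod m x ≤ Pprod m y := by
  unfold Pprod
  apply Finset.prod_le_prod
  · intro j hj
    exact le_of_lt (iterlog_pos (le_trans (etower_mono (Finset.mem_Icc.mp hj).2) h))
  · intro j hj
    exact iterlog_le_iterlog j (le_trans (etower_mono (Finset.mem_Icc.mp hj).2) h) hxy

lemma Pprod_le_pow {m : ℕ} {x : ℝ} (h : etower m ≤ x) : Pprod m x ≤ x ^ m := by
  have : Pprod m x ≤ ∏ _j ∈ Finset.Icc 1 m, x := by
    unfold Pprod
    apply Finset.prod_le_prod
    · intro j hj
      exact le_of_lt (iterlog_pos (le_trans (etower_mono (Finset.mem_Icc.mp hj).2) h))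
    · intro j hj
      exact iterlog_le_self j (le_trans (etower_mono (Finset.mem_Icc.mp hj).2) h)
  simpa [Nat.card_Icc] using this

/-- `∏_{j ∈ Ioc i (i+m)} log^[j] x = Pprod m (log^[i] x)` -/
lemma prod_Ioc_eq_Pprod (i : ℕ) : ∀ (m : ℕ) (x : ℝ),
    ∏ j ∈ Finset.Ioc i (i + m), Real.log^[j] x = Pprod m (Real.log^[i] x)
  | 0, x => by simp [Pprod]
  | m + 1, x => by
    rw [show i + (m + 1) = (i + m) + 1 by omega,
      Finset.prod_Ioc_succ_top (Nat.le_add_right i m), prod_Ioc_eq_Pprod i m x, Pprod_succ]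
    congr 1
    rw [show (i + m) + 1 = (m + 1) + i by omega, Function.iterate_add_apply]

/-! derivatives -/

lemma prod_range_iterlog (m : ℕ) (x : ℝ) :
    ∏ l ∈ Finset.range (m + 1), Real.log^[l] x = x * Pprod m x := by
  rw [Finset.prod_range_succ']
  simp only [Function.iterate_zero_apply]
  rw [mul_comm]
  congr 1
  rw [Pprod, ← Finset.Ico_add_one_right_eq_Icc, Finset.prod_Ico_eq_prod_range]
  simp [add_comm]

lemma hasDerivAt_iterlog : ∀ (j : ℕ) {x : ℝ}, etower j ≤ x →
    HasDerivAt (Real.log^[j]) (∏ l ∈ Finset.range j, Real.log^[l] x)⁻¹ x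
  | 0, x, _ => by simpa using hasDerivAt_id x
  | j + 1, x, hx => by
    have hx' : etower j ≤ x := le_trans (etower_le_succ j) hx
    have hpos : 0 < Real.log^[j] x := iterlog_pos hx'
    have ih := hasDerivAt_iterlog j hx'
    have hcomp := (Real.hasDerivAt_log (ne_of_gt hpos)).comp x ih
    rw [← Function.iterate_succ'] at hcomp
    refine hcomp.congr_deriv ?_
    rw [Finset.prod_range_succ, mul_inv]
    ring

noncomputable def Gd (m : ℕ) (x : ℝ) : ℝ :=
  Pprod m x + ∑ i ∈ Finset.Icc 1 m, ∏ j ∈ Finset.Ioc i m, Real.log^[j] x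

lemma hasDerivAt_G : ∀ (m : ℕ) {x : ℝ}, etower m ≤ x →
    HasDerivAt (fun y => y * Pprod m y) (Gd m x) x
  | 0, x, _ => by
    have : HasDerivAt (fun y : ℝ => y) 1 x := hasDerivAt_id x
    simp only [Gd, Pprod_zero, mul_one]
    simpa using this
  | m + 1, x, hx => by
    have hx' : etower m ≤ x := le_trans (etower_le_succ m) hx
    have hxpos : 0 < x := lt_of_lt_of_le (etower_pos _) hx
    have ih := hasDerivAt_G m hx'
    have hd := hasDerivAt_iterlog (m + 1) hx
    have hmul := ih.mul hd
    have hfun : (fun y => y * Pprod (m + 1) y)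
        = fun y => (y * Pprod m y) * Real.log^[m + 1] y := by
      funext y; rw [Pprod_succ]; ring
    rw [hfun]
    refine hmul.congr_deriv ?_
    have hP : (0:ℝ) < Pprod m x := lt_of_lt_of_le one_pos (one_le_Pprod hx')
    have hne : x * Pprod m x ≠ 0 := by positivity
    rw [prod_range_iterlog]
    have hsum : ∑ i ∈ Finset.Icc 1 (m + 1), ∏ j ∈ Finset.Ioc i (m + 1), Real.log^[j] x
        = (∑ i ∈ Finset.Icc 1 m, ∏ j ∈ Finset.Ioc i m, Real.log^[j] x)
            * Real.log^[m + 1] x + 1 := by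
      rw [Finset.sum_Icc_succ_top (Nat.le_add_left 1 m)]
      rw [show (Finset.Ioc (m + 1) (m + 1)) = ∅ by simp]
      rw [Finset.prod_empty, Finset.sum_mul]
      congr 1
      apply Finset.sum_congr rfl
      intro i hi
      rw [Finset.prod_Ioc_succ_top (Finset.mem_Icc.mp hi).2]
    rw [Gd, Gd, hsum, Pprod_succ, mul_inv_cancel₀ hne]
    ring

/-! bound on Gd -/

lemma Gd_le (n : ℕ) {x : ℝ} (hx : etower (n + 2) ≤ x) :
    Gd (n + 2) x ≤ Pprod (n + 2) x
      + (1 / etower (n + 1) + (n + 1) / (etower (n + 1) * etower n)) * Pprod (n + 1) x := by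
  have hE1 : 0 < etower (n + 1) := etower_pos _
  have hE0 : 0 < etower n := etower_pos _
  set y := Real.log x with hydef
  have hy : etower (n + 1) ≤ y := by
    have := le_iterlog 1 (n + 1) x (by rw [show 1 + (n + 1) = n + 2 by omega]; exact hx)
    simpa using this
  have hy' : etower n ≤ y := le_trans (etower_le_succ n) hy
  have hly : etower n ≤ Real.log y := by
    calc etower n = Real.log (etower (n + 1)) := by rw [etower_succ, Real.log_exp]
      _ ≤ Real.log y := Real.log_le_log (etower_pos _) hy
  -- identity : Pprod (n+1) x = y * Pprod n y
  have hPx : Pprod (n + 1) x = y * Pprod n y := Pprod_shift n x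
  have hPny : 0 ≤ Pprod n y := Pprod_nonneg hy'
  have hPnly : 0 ≤ Pprod n (Real.log y) := Pprod_nonneg hly
  -- (i) : Pprod (n+1) y * e_{n+1} ≤ Pprod (n+1) x
  have hi : Pprod (n + 1) y * etower (n + 1) ≤ Pprod (n + 1) x := by
    rw [Pprod_succ, hPx]
    have := iterlog_mul_etower_le (n + 1) hy
    nlinarith
  -- (ii) : Pprod n (log y) * (e_{n+1} * e_n) ≤ Pprod (n+1) x
  have hii : Pprod n (Real.log y) * (etower (n + 1) * etower n) ≤ Pprod (n + 1) x := by
    have hsh : Pprod (n + 1) y = Real.log y * Pprod n (Real.log y) := Pprod_shift n y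
    have h1 : Pprod n (Real.log y) * (etower (n + 1) * etower n)
        ≤ Pprod (n + 1) y * etower (n + 1) := by
      rw [hsh]
      nlinarith [mul_le_mul_of_nonneg_left hly (mul_nonneg hPnly hE1.le)]
    exact le_trans h1 hi
  -- the sum bound
  have hsplit : Finset.Icc 1 (n + 2) = insert 1 (Finset.Ioc 1 (n + 2)) :=
    (Finset.Ioc_insert_left (by omega)).symm
  have hT1 : ∏ j ∈ Finset.Ioc 1 (n + 2), Real.log^[j] x = Pprod (n + 1) y := by
    have := prod_Ioc_eq_Pprod 1 (n + 1) x
    rw [show 1 + (n + 1) = n + 2 by omega] at this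
    simpa using this
  have hT2 : ∏ j ∈ Finset.Ioc 2 (n + 2), Real.log^[j] x = Pprod n (Real.log y) := by
    have := prod_Ioc_eq_Pprod 2 n x
    rw [show 2 + n = n + 2 by omega] at this
    rw [this]
    congr 1
  have hterm : ∀ i ∈ Finset.Ioc 1 (n + 2),
      ∏ j ∈ Finset.Ioc i (n + 2), Real.log^[j] x ≤ Pprod n (Real.log y) := by
    intro i hi'
    rw [← hT2]
    apply prod_le_prod_subset_real (Finset.Ioc_subset_Ioc (Finset.mem_Ioc.mp hi').1 le_rfl)
    intro j hj
    exact one_le_iterlog (le_trans (etower_mono (Finset.mem_Ioc.mp hj).2) hx)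
  have hsum : ∑ i ∈ Finset.Icc 1 (n + 2), ∏ j ∈ Finset.Ioc i (n + 2), Real.log^[j] x
      ≤ Pprod (n + 1) y + (n + 1) * Pprod n (Real.log y) := by
    rw [hsplit, Finset.sum_insert (by simp)]
    have hcard : (Finset.Ioc 1 (n + 2)).card = n + 1 := by
      rw [Nat.card_Ioc]
      omega
    have := Finset.sum_le_card_nsmul (Finset.Ioc 1 (n + 2))
      (fun i => ∏ j ∈ Finset.Ioc i (n + 2), Real.log^[j] x) (Pprod n (Real.log y)) hterm
    rw [hcard, nsmul_eq_mul] at this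
    push_cast at this ⊢
    rw [hT1]
    linarith
  -- combine
  have hfin : Pprod (n + 1) y + (n + 1) * Pprod n (Real.log y)
      ≤ (1 / etower (n + 1) + (n + 1) / (etower (n + 1) * etower n)) * Pprod (n + 1) x := by
    have h1 : Pprod (n + 1) y ≤ 1 / etower (n + 1) * Pprod (n + 1) x := by
      rw [div_mul_eq_mul_div, le_div_iff₀ hE1]
      linarith
    have h2 : (n + 1 : ℝ) * Pprod n (Real.log y)
        ≤ (n + 1) / (etower (n + 1) * etower n) * Pprod (n + 1) x := by
      rw [div_mul_eq_mul_div, le_div_iff₀ (by positivity)]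
      have hn1 : (0:ℝ) ≤ (n:ℝ) + 1 := by positivity
      calc (n + 1 : ℝ) * Pprod n (Real.log y) * (etower (n + 1) * etower n)
          = (n + 1 : ℝ) * (Pprod n (Real.log y) * (etower (n + 1) * etower n)) := by ring
        _ ≤ (n + 1 : ℝ) * Pprod (n + 1) x := by
            apply mul_le_mul_of_nonneg_left hii hn1
        _ = (n + 1 : ℝ) * Pprod (n + 1) x := rfl
    rw [add_mul]
    linarith
  rw [Gd]
  linarith

/-! continuity -/

lemma contOn_iterlog (j : ℕ) : ContinuousOn (Real.log^[j]) (Set.Ici (etower j)) :=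
  fun x hx => ((hasDerivAt_iterlog j hx).continuousAt).continuousWithinAt

lemma contOn_Pprod (m : ℕ) : ContinuousOn (fun x => Pprod m x) (Set.Ici (etower m)) := by
  unfold Pprod
  apply continuousOn_finset_prod
  intro j hj
  exact (contOn_iterlog j).mono
    (Set.Ici_subset_Ici.mpr (etower_mono (Finset.mem_Icc.mp hj).2))

lemma contOn_Gd (m : ℕ) : ContinuousOn (fun x => Gd m x) (Set.Ici (etower m)) := by
  unfold Gd
  apply ContinuousOn.add (contOn_Pprod m)
  apply continuousOn_finset_sum
  intro i _
  apply continuousOn_finset_prod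
  intro j hj
  exact (contOn_iterlog j).mono
    (Set.Ici_subset_Ici.mpr (etower_mono (Finset.mem_Ioc.mp hj).2))

/-- `hseq 1 = 1` and `hseq (k+1) = e^{hseq k} + 1/4`. -/
noncomputable def hseq : ℕ → ℝ
  | 0 => 0
  | 1 => 1
  | k + 2 => Real.exp (hseq (k + 1)) + 1 / 4

/-- `Tfun 1 z = ln z` for `z > hseq 1` (and `0` otherwise), and
`Tfun k z = ∫_{hseq (k-1)}^{ln(z - 1/4)} Tfun (k-1)` for `z > hseq k` (and `0` otherwise). -/
noncomputable def Tfun : ℕ → ℝ → ℝ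
  | 0 => fun _ => 0
  | 1 => fun z => if hseq 1 < z then Real.log z else 0
  | k + 2 => fun z =>
      if hseq (k + 2) < z then
        ∫ w in hseq (k + 1)..Real.log (z - 1 / 4), Tfun (k + 1) w
      else 0

/-! Tfun basic facts -/

lemma hseq_one : hseq 1 = 1 := rfl

lemma hseq_succ_succ (k : ℕ) : hseq (k + 2) = Real.exp (hseq (k + 1)) + 1 / 4 := rfl

lemma Tfun_one (z : ℝ) : Tfun 1 z = if hseq 1 < z then Real.log z else 0 := rfl

lemma Tfun_succ_succ (k : ℕ) (z : ℝ) : Tfun (k + 2) z =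
    if hseq (k + 2) < z then
      ∫ w in hseq (k + 1)..Real.log (z - 1 / 4), Tfun (k + 1) w
    else 0 := rfl

lemma hseq_lt_log {k : ℕ} {z : ℝ} (h : hseq (k + 2) < z) :
    hseq (k + 1) < Real.log (z - 1 / 4) := by
  have h1 : Real.exp (hseq (k + 1)) < z - 1 / 4 := by
    rw [hseq_succ_succ] at h; linarith
  calc hseq (k + 1) = Real.log (Real.exp (hseq (k + 1))) := (Real.log_exp _).symm
    _ < Real.log (z - 1 / 4) := Real.log_lt_log (Real.exp_pos _) h1

lemma Tfun_nonneg : ∀ (r : ℕ) (x : ℝ), 0 ≤ Tfun r x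
  | 0, x => le_refl 0
  | 1, x => by
    rw [Tfun_one]
    split
    · exact Real.log_nonneg (by rw [hseq_one] at *; linarith [‹hseq 1 < x›, hseq_one])
    · exact le_refl 0
  | r + 2, x => by
    rw [Tfun_succ_succ]
    split
    · apply intervalIntegral.integral_nonneg (le_of_lt (hseq_lt_log ‹_›))
      intro w _
      exact Tfun_nonneg (r + 1) w
    · exact le_refl 0

lemma Tfun_mono : ∀ (r : ℕ), Monotone (Tfun (r + 1))
  | 0 => by
    intro x y hxy
    rw [show (0:ℕ) + 1 = 1 by rfl, Tfun_one, Tfun_one]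
    by_cases hx : hseq 1 < x
    · rw [if_pos hx, if_pos (lt_of_lt_of_le hx hxy)]
      exact Real.log_le_log (by rw [hseq_one] at hx; linarith) hxy
    · rw [if_neg hx]
      have := Tfun_nonneg 1 y
      rw [Tfun_one] at this
      exact this
  | r + 1 => by
    intro x y hxy
    rw [Tfun_succ_succ, Tfun_succ_succ]
    by_cases hx : hseq (r + 2) < x
    · rw [if_pos hx, if_pos (lt_of_lt_of_le hx hxy)]
      have hx4 : 0 < x - 1 / 4 := by
        have := (Real.exp_pos (hseq (r + 1))).trans (by rw [hseq_succ_succ] at hx; linarith :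
          Real.exp (hseq (r + 1)) < x - 1 / 4)
        linarith
      have hu : Real.log (x - 1 / 4) ≤ Real.log (y - 1 / 4) :=
        Real.log_le_log hx4 (by linarith)
      have hi1 : IntervalIntegrable (Tfun (r + 1)) MeasureTheory.volume
          (hseq (r + 1)) (Real.log (x - 1 / 4)) := (Tfun_mono r).intervalIntegrable
      have hi2 : IntervalIntegrable (Tfun (r + 1)) MeasureTheory.volume
          (Real.log (x - 1 / 4)) (Real.log (y - 1 / 4)) := (Tfun_mono r).intervalIntegrable
      rw [← intervalIntegral.integral_add_adjacent_intervals hi1 hi2]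
      have : 0 ≤ ∫ w in Real.log (x - 1/4)..Real.log (y - 1/4), Tfun (r + 1) w :=
        intervalIntegral.integral_nonneg hu (fun w _ => Tfun_nonneg (r + 1) w)
      linarith
    · rw [if_neg hx]
      have := Tfun_nonneg (r + 2) y
      rw [Tfun_succ_succ] at this
      exact this

/-! misc helper lemmas -/

lemma log_add_le {A c : ℝ} (hA : 1 ≤ A) (hc : 0 ≤ c) :
    Real.log (A + c) ≤ Real.log A + c / A := by
  have hA0 : 0 < A := by linarith
  have hpos : 0 < (A + c) / A := div_pos (by linarith) hA0
  have h := Real.log_le_sub_one_of_pos hpos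
  rw [Real.log_div (by linarith) (ne_of_gt hA0)] at h
  have : (A + c) / A - 1 = c / A := by field_simp; ring
  linarith [this ▸ h]

lemma hseq_le_etower : ∀ r : ℕ, hseq (r + 1) ≤ etower (r + 1) - 2⁻¹
  | 0 => by
    have h := Real.exp_one_gt_d9
    show (1:ℝ) ≤ Real.exp 1 - 2⁻¹
    norm_num at h ⊢
    linarith
  | r + 1 => by
    have ih := hseq_le_etower r
    rw [hseq_succ_succ]
    have h1 : Real.exp (hseq (r + 1)) ≤ Real.exp (etower (r + 1) - 2⁻¹) :=
      Real.exp_le_exp.mpr (by linarith)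
    have h2 : Real.exp (etower (r + 1) - 2⁻¹) = etower (r + 2) * Real.exp (-2⁻¹) := by
      rw [etower_succ (r + 1), ← Real.exp_add]
      ring_nf
    have h3 : Real.exp (-(2:ℝ)⁻¹) ≤ 2/3 := by
      rw [Real.exp_neg]
      have h4 : (3:ℝ)/2 ≤ Real.exp 2⁻¹ := by
        have := Real.add_one_le_exp (2⁻¹ : ℝ)
        linarith
      rw [inv_le_comm₀ (Real.exp_pos _) (by norm_num)] at *
      · linarith
    have h5 : (4:ℝ) ≤ etower (r + 2) := by
      have hA : etower 2 ≤ etower (r + 2) := etower_mono (by omega)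
      have hB : Real.exp 1 * Real.exp 1 ≤ etower 2 := by
        have hx : etower 2 = Real.exp 1 * Real.exp (Real.exp 1 - 1) := by
          rw [show etower 2 = Real.exp (Real.exp 1) from rfl, ← Real.exp_add]
          ring_nf
        have hy : Real.exp 1 ≤ Real.exp (Real.exp 1 - 1) := by
          have := Real.add_one_le_exp (Real.exp 1 - 1); linarith
        rw [hx]
        nlinarith [Real.exp_pos 1]
      have he := Real.exp_one_gt_d9
      nlinarith
    have h6 : etower (r + 2) * Real.exp (-2⁻¹) ≤ etower (r + 2) - 2⁻¹ - 4⁻¹ := by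
      have hE : 0 < etower (r + 2) := etower_pos _
      nlinarith
    linarith

lemma iterlog_le_one_add {c : ℝ} (hc : 0 < c) : ∀ (r : ℕ) (y : ℝ),
    etower r ≤ y → y ≤ etower r + c → Real.log^[r] y ≤ 1 + c
  | 0, y, _, h2 => by simpa [etower] using h2
  | r + 1, y, h1, h2 => by
    rw [Function.iterate_succ_apply]
    have hy0 : 0 < y := lt_of_lt_of_le (etower_pos _) h1
    have hlo : etower r ≤ Real.log y := by
      calc etower r = Real.log (etower (r + 1)) := by rw [etower_succ, Real.log_exp]
        _ ≤ Real.log y := Real.log_le_log (etower_pos _) h1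
    have hhi : Real.log y ≤ etower r + c := by
      have h3 : Real.log y ≤ Real.log (etower (r + 1) + c) :=
        Real.log_le_log hy0 h2
      have h4 : Real.log (etower (r + 1) + c) ≤ etower r + c / etower (r + 1) := by
        have h4' := log_add_le (one_le_etower (r + 1)) (le_of_lt hc)
        rwa [show Real.log (etower (r + 1)) = etower r from by
          rw [etower_succ, Real.log_exp]] at h4'
      have h5 : c / etower (r + 1) ≤ c := by
        rw [div_le_iff₀ (etower_pos _)]
        nlinarith [one_le_etower (r + 1)]
      linarith
    exact iterlog_le_one_add hc r (Real.log y) hlo hhi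

lemma sq_add_le_exp {t : ℝ} (ht : Real.exp 1 ≤ t) : t ^ 2 + 2 * t ≤ Real.exp t := by
  have he1 : (2.7182818283 : ℝ) < Real.exp 1 := Real.exp_one_gt_d9
  have he2 : Real.exp 1 < (2.7182818286 : ℝ) := Real.exp_one_lt_d9
  set e1 := Real.exp 1 with he1def
  have hs : 0 ≤ t - e1 := by linarith
  have hsplit : Real.exp t = Real.exp e1 * Real.exp (t - e1) := by
    rw [← Real.exp_add]; ring_nf
  have h2 : (1 + (t - e1) / 2) ^ 2 ≤ Real.exp (t - e1) := by
    have ha := Real.add_one_le_exp ((t - e1) / 2)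
    have hb : Real.exp ((t - e1) / 2) * Real.exp ((t - e1) / 2) = Real.exp (t - e1) := by
      rw [← Real.exp_add]; ring_nf
    nlinarith
  have h4 : e1 ^ 3 * (e1 - 2) ≤ Real.exp e1 := by
    have hx : Real.exp e1 = Real.exp 3 * Real.exp (e1 - 3) := by
      rw [← Real.exp_add]; ring_nf
    have h5 : e1 - 2 ≤ Real.exp (e1 - 3) := by
      have := Real.add_one_le_exp (e1 - 3); linarith
    have h6 : Real.exp (3:ℝ) = e1 ^ 3 := by
      rw [show (3:ℝ) = ((3:ℕ) : ℝ) * 1 by norm_num, Real.exp_nat_mul]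
    rw [hx, h6]
    nlinarith [pow_pos (lt_trans (by norm_num) he1) 3]
  have h7 : e1 ^ 3 * (e1 - 2) * ((1 + (t - e1) / 2) ^ 2) ≤ Real.exp e1 * Real.exp (t - e1) := by
    apply mul_le_mul h4 h2 (sq_nonneg _) (le_of_lt (Real.exp_pos _))
  have hK : (14.4 : ℝ) ≤ e1 ^ 3 * (e1 - 2) := by nlinarith [he1, he2, sq_nonneg (e1 - 2.7182818283)]
  have hQ : t ^ 2 + 2 * t ≤ 14.4 * (1 + (t - e1) + (t - e1) ^ 2 / 4) := by
    nlinarith [hs, he1, he2, sq_nonneg (t - e1), mul_nonneg hs hs,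
      mul_nonneg hs (le_of_lt (sub_pos.mpr he1)),
      mul_nonneg hs (le_of_lt (sub_pos.mpr he2))]
  have hfin : (14.4 : ℝ) * (1 + (t - e1) + (t - e1) ^ 2 / 4)
      ≤ e1 ^ 3 * (e1 - 2) * ((1 + (t - e1) / 2) ^ 2) := by
    nlinarith [hK, sq_nonneg (1 + (t - e1) / 2)]
  rw [hsplit]
  linarith
set_option maxHeartbeats 2000000 in
theorem Tfun_lower_bound_step (k : ℕ) (hk : 3 ≤ k) (a : ℝ) (ha : 1 ≤ a)
    (hind : ∀ z : ℝ, etower (k - 1) ≤ z →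
      (∏ j ∈ Finset.Icc 1 (k - 1), Real.log^[j] z)
        - a * ∏ j ∈ Finset.Icc 1 (k - 2), Real.log^[j] z ≤ Tfun (k - 1) z) :
    ∀ z : ℝ, etower k ≤ z →
      (∏ j ∈ Finset.Icc 1 k, Real.log^[j] z)
        - (a + 1 / etower (k - 2) + ((k : ℝ) - 2) / (etower (k - 2) * etower (k - 3)))
          * ∏ j ∈ Finset.Icc 1 (k - 1), Real.log^[j] z ≤ Tfun k z := by
  obtain ⟨n, rfl⟩ : ∃ n, k = n + 3 := ⟨k - 3, by omega⟩
  intro z hz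
  simp only [show n + 3 - 1 = n + 2 from rfl, show n + 3 - 2 = n + 1 from rfl,
    show n + 3 - 3 = n from rfl] at hind ⊢
  have hcast : ((n + 3 : ℕ) : ℝ) - 2 = (n : ℝ) + 1 := by push_cast; ring
  rw [hcast]
  set E0 := etower n with hE0def
  set E1 := etower (n + 1) with hE1def
  set E2 := etower (n + 2) with hE2def
  set E3 := etower (n + 3) with hE3def
  set C : ℝ := 1 / E1 + ((n : ℝ) + 1) / (E1 * E0) with hCdef
  clear_value C
  have hE0pos : 0 < E0 := etower_pos n
  have hE1pos : 0 < E1 := etower_pos (n + 1)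
  have hE2pos : 0 < E2 := etower_pos (n + 2)
  have hE3pos : 0 < E3 := etower_pos (n + 3)
  have hE12 : E1 ≤ E2 := etower_le_succ (n + 1)
  have hE23 : E2 ≤ E3 := etower_le_succ (n + 2)
  have hE01 : E0 ≤ E1 := etower_le_succ n
  have hE2one : 1 ≤ E2 := one_le_etower _
  have hE1one : 1 ≤ E1 := one_le_etower _
  have hC1pos : 0 < 1 / E1 := by positivity
  have hC2pos : 0 ≤ ((n : ℝ) + 1) / (E1 * E0) := by positivity
  have hCpos : 0 < C := by rw [hCdef]; linarith
  have hgoalC : a + 1 / E1 + ((n : ℝ) + 1) / (E1 * E0) = a + C := by rw [hCdef]; ring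
  rw [hgoalC]
  have hind' : ∀ w : ℝ, E2 ≤ w → Pprod (n + 2) w - a * Pprod (n + 1) w ≤ Tfun (n + 2) w :=
    fun w hw => hind w hw
  show Pprod (n + 3) z - (a + C) * Pprod (n + 2) z ≤ Tfun (n + 3) z
  have hzE3 : E3 ≤ z := hz
  have hzpos : 0 < z := lt_of_lt_of_le hE3pos hzE3
  rcases le_or_gt z (E3 + 1 / 4) with hcase | hcase
  · -- small z case : RHS of bound is nonpositive
    have hT : 0 ≤ Tfun (n + 3) z := Tfun_nonneg _ z
    have hP2 : 0 ≤ Pprod (n + 2) z :=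
      Pprod_nonneg (le_trans (etower_le_succ (n + 2)) hz)
    have hsplitP : Pprod (n + 3) z = Pprod (n + 2) z * Real.log^[n + 3] z := Pprod_succ _ z
    -- iterated log bound
    have hlog1 : Real.log z ≤ E2 + 1 / 4 / E3 := by
      have h1 : Real.log z ≤ Real.log (E3 + 1 / 4) := Real.log_le_log hzpos hcase
      have h2 : Real.log (E3 + 1 / 4) ≤ Real.log E3 + 1 / 4 / E3 :=
        log_add_le (one_le_etower _) (by norm_num)
      have h3 : Real.log E3 = E2 := by rw [hE3def, etower_succ, Real.log_exp]
      linarith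
    have hlz : E2 ≤ Real.log z := by
      have := le_iterlog 1 (n + 2) z (by rw [show 1 + (n + 2) = n + 3 by omega]; exact hz)
      simpa using this
    have hlog2 : Real.log^[2] z ≤ E1 + 1 / E1 := by
      have h1 : Real.log (Real.log z) ≤ Real.log (E2 + 1 / 4 / E3) :=
        Real.log_le_log (lt_of_lt_of_le hE2pos hlz) hlog1
      have h2 : Real.log (E2 + 1 / 4 / E3) ≤ Real.log E2 + (1 / 4 / E3) / E2 :=
        log_add_le hE2one (by positivity)
      have h3 : Real.log E2 = E1 := by rw [hE2def, etower_succ, Real.log_exp]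
      have h4 : (1 / 4 / E3) / E2 ≤ 1 / E1 := by
        have heq : (1 / 4 / E3) / E2 = 1 / (4 * (E3 * E2)) := by
          field_simp
        have h42 : E1 ≤ 4 * (E3 * E2) := by
          have h43 : E1 ≤ E3 := le_trans hE12 hE23
          nlinarith [mul_nonneg (le_of_lt hE3pos) (by linarith : (0:ℝ) ≤ 4 * E2 - 1)]
        rw [heq]
        exact one_div_le_one_div_of_le hE1pos h42
      have h5 : Real.log^[2] z = Real.log (Real.log z) := by
        rw [show (2:ℕ) = 1 + 1 from rfl, Function.iterate_add_apply]
        simp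
      rw [h5]
      linarith
    have hl2lo : E1 ≤ Real.log^[2] z :=
      le_iterlog 2 (n + 1) z (by rw [show 2 + (n + 1) = n + 3 by omega]; exact hz)
    have hiter : Real.log^[n + 3] z ≤ 1 + 1 / E1 := by
      have h6 : Real.log^[n + 3] z = Real.log^[n + 1] (Real.log^[2] z) := by
        rw [show n + 3 = (n + 1) + 2 by omega, Function.iterate_add_apply]
      rw [h6]
      exact iterlog_le_one_add (by positivity) (n + 1) _ hl2lo hlog2
    have hAC : 1 + 1 / E1 ≤ a + C := by
      have : 0 ≤ ((n : ℝ) + 1) / (E1 * E0) := by positivity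
      rw [hCdef]; linarith
    have hneg : Pprod (n + 2) z * (Real.log^[n + 3] z - (a + C)) ≤ 0 :=
      mul_nonpos_of_nonneg_of_nonpos hP2 (sub_nonpos.mpr (le_trans hiter hAC))
    rw [hsplitP]
    calc Pprod (n + 2) z * Real.log^[n + 3] z - (a + C) * Pprod (n + 2) z
        = Pprod (n + 2) z * (Real.log^[n + 3] z - (a + C)) := by ring
      _ ≤ 0 := hneg
      _ ≤ Tfun (n + 3) z := hT
  · -- main case
    set u := Real.log (z - 1 / 4) with hudef
    set v := Real.log z with hvdef
    have hz4 : E3 ≤ z - 1 / 4 := by linarith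
    have hz4pos : 0 < z - 1 / 4 := lt_of_lt_of_le hE3pos hz4
    have hu2 : E2 ≤ u := by
      have h3 : Real.log E3 = E2 := by rw [hE3def, etower_succ, Real.log_exp]
      rw [hudef, ← h3]
      exact Real.log_le_log hE3pos hz4
    have huv : u ≤ v := Real.log_le_log hz4pos (by linarith)
    have hvE2 : E2 ≤ v := le_trans hu2 huv
    have hupos : 0 < u := lt_of_lt_of_le hE2pos hu2
    have huone : 1 ≤ u := le_trans hE2one hu2
    -- unfold Tfun
    have hTz : Tfun (n + 3) z =
        if hseq (n + 3) < z then
          ∫ w in hseq (n + 2)..Real.log (z - 1 / 4), Tfun (n + 2) w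
        else 0 := Tfun_succ_succ (n + 1) z
    have hhs : hseq (n + 3) < z := by
      have := hseq_le_etower (n + 2)
      have h2 : hseq (n + 3) ≤ E3 - 2⁻¹ := this
      norm_num at h2 ⊢
      linarith
    rw [hTz, if_pos hhs]
    -- split integral
    have hsm : hseq (n + 2) ≤ E2 := by
      have := hseq_le_etower (n + 1)
      norm_num at this
      linarith
    have hI1 : IntervalIntegrable (Tfun (n + 2)) MeasureTheory.volume (hseq (n + 2)) E2 :=
      (Tfun_mono (n + 1)).intervalIntegrable
    have hI2 : IntervalIntegrable (Tfun (n + 2)) MeasureTheory.volume E2 u :=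
      (Tfun_mono (n + 1)).intervalIntegrable
    have hsplitInt : ∫ w in hseq (n + 2)..u, Tfun (n + 2) w =
        (∫ w in hseq (n + 2)..E2, Tfun (n + 2) w) + ∫ w in E2..u, Tfun (n + 2) w :=
      (intervalIntegral.integral_add_adjacent_intervals hI1 hI2).symm
    have hpos1 : 0 ≤ ∫ w in hseq (n + 2)..E2, Tfun (n + 2) w :=
      intervalIntegral.integral_nonneg hsm (fun w _ => Tfun_nonneg _ w)
    -- continuity and integrability of the lower-bound integrand
    have hsubIcc : Set.Icc E2 u ⊆ Set.Ici E2 := fun x hx => hx.1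
    have hGdcont : ContinuousOn (fun w => Gd (n + 2) w) (Set.Icc E2 u) :=
      (contOn_Gd (n + 2)).mono hsubIcc
    have hPcont : ContinuousOn (fun w => Pprod (n + 1) w) (Set.Icc E2 u) :=
      ((contOn_Pprod (n + 1)).mono (fun x hx => le_trans hE12 (hsubIcc hx)))
    have hGdint : IntervalIntegrable (fun w => Gd (n + 2) w) MeasureTheory.volume E2 u := by
      apply ContinuousOn.intervalIntegrable
      rwa [Set.uIcc_of_le hu2]
    have hPint : IntervalIntegrable (fun w => Pprod (n + 1) w) MeasureTheory.volume E2 u := by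
      apply ContinuousOn.intervalIntegrable
      rwa [Set.uIcc_of_le hu2]
    have hfint : IntervalIntegrable (fun w => Gd (n + 2) w - (a + C) * Pprod (n + 1) w)
        MeasureTheory.volume E2 u := hGdint.sub (hPint.const_mul _)
    -- pointwise bound
    have hptw : ∀ w ∈ Set.Icc E2 u,
        Gd (n + 2) w - (a + C) * Pprod (n + 1) w ≤ Tfun (n + 2) w := by
      intro w hw
      have hwE2 : E2 ≤ w := hw.1
      have h1 := Gd_le n hwE2
      have h2 := hind' w hwE2
      have h3 : (1 / E1 + ((n:ℝ) + 1) / (E1 * E0)) = C := by rw [hCdef]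
      rw [h3] at h1
      linarith
    have hmonoInt : (∫ w in E2..u, (Gd (n + 2) w - (a + C) * Pprod (n + 1) w))
        ≤ ∫ w in E2..u, Tfun (n + 2) w :=
      intervalIntegral.integral_mono_on hu2 hfint hI2 hptw
    -- evaluate the lower integral
    have hsub : (∫ w in E2..u, (Gd (n + 2) w - (a + C) * Pprod (n + 1) w))
        = (∫ w in E2..u, Gd (n + 2) w) - ∫ w in E2..u, (a + C) * Pprod (n + 1) w :=
      intervalIntegral.integral_sub hGdint (hPint.const_mul _)
    have hconstmul : (∫ w in E2..u, (a + C) * Pprod (n + 1) w)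
        = (a + C) * ∫ w in E2..u, Pprod (n + 1) w :=
      intervalIntegral.integral_const_mul _ _
    have hFTC : (∫ w in E2..u, Gd (n + 2) w)
        = u * Pprod (n + 2) u - E2 * Pprod (n + 2) E2 := by
      have h := intervalIntegral.integral_eq_sub_of_hasDerivAt
        (f := fun y => y * Pprod (n + 2) y) (f' := fun w => Gd (n + 2) w) (a := E2) (b := u)
        (fun x hx => hasDerivAt_G (n + 2) (by rw [Set.uIcc_of_le hu2] at hx; exact hx.1))
        hGdint
      simpa using h
    have hPle : (∫ w in E2..u, Pprod (n + 1) w) ≤ (u - E2) * Pprod (n + 1) u := by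
      have h1 : (∫ w in E2..u, Pprod (n + 1) w) ≤ ∫ _w in E2..u, Pprod (n + 1) u := by
        apply intervalIntegral.integral_mono_on hu2 hPint intervalIntegrable_const
        intro w hw
        exact Pprod_le_Pprod (le_trans hE12 hw.1) hw.2
      rwa [intervalIntegral.integral_const, smul_eq_mul] at h1
    -- key atoms
    have hP1u_nonneg : 0 ≤ Pprod (n + 1) u := Pprod_nonneg (le_trans hE12 hu2)
    have hP1v : Pprod (n + 1) u ≤ Pprod (n + 1) v := Pprod_le_Pprod (le_trans hE12 hu2) huv
    have hP1E2 : Pprod (n + 1) E2 ≤ Pprod (n + 1) u := Pprod_le_Pprod hE12 hu2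
    have hP1E2_nonneg : 0 ≤ Pprod (n + 1) E2 := Pprod_nonneg hE12
    have hP2E2 : Pprod (n + 2) E2 = Pprod (n + 1) E2 := by
      rw [Pprod_succ]
      rw [hE2def, iterlog_tower_self, mul_one]
    have hshift1 : Pprod (n + 3) z = v * Pprod (n + 2) v := Pprod_shift (n + 2) z
    have hshift2 : Pprod (n + 2) z = v * Pprod (n + 1) v := Pprod_shift (n + 1) z
    have hP1uE1 : E1 ≤ Pprod (n + 1) u := by
      have hlu : E1 ≤ Real.log u := by
        calc E1 = Real.log E2 := by rw [hE2def, etower_succ, Real.log_exp]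
          _ ≤ Real.log u := Real.log_le_log hE2pos hu2
      have h1 : Pprod (n + 1) u = Real.log u * Pprod n (Real.log u) := Pprod_shift n u
      have h2 : 1 ≤ Pprod n (Real.log u) := one_le_Pprod (le_trans hE01 hlu)
      have h3 := mul_le_mul hlu h2 zero_le_one (le_trans (le_of_lt hE1pos) hlu)
      rw [h1]
      linarith
    have hslack : E2 ≤ C * (E2 * Pprod (n + 1) u) := by
      have h1 : 1 / E1 * (E2 * E1) ≤ C * (E2 * Pprod (n + 1) u) := by
        have hC1 : 1 / E1 ≤ C := by
          have : 0 ≤ ((n:ℝ) + 1) / (E1 * E0) := by positivity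
          rw [hCdef]; linarith
        apply mul_le_mul hC1 (mul_le_mul_of_nonneg_left hP1uE1 (le_of_lt hE2pos))
          (by positivity) (le_of_lt hCpos)
      have h2 : 1 / E1 * (E2 * E1) = E2 := by field_simp
      linarith
    -- the gap bound : v * P2 v - u * P2 u ≤ E2
    have hgap : v * Pprod (n + 2) v - u * Pprod (n + 2) u ≤ E2 := by
      set ε := v - u with hεdef
      clear_value ε
      have hε0 : 0 ≤ ε := by linarith
      have hexpu : Real.exp u = z - 1 / 4 := Real.exp_log hz4pos
      have hεsmall : ε * Real.exp u ≤ 1 / 4 := by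
        have h1 : v - u = Real.log (z / (z - 1 / 4)) := by
          rw [hvdef, hudef, Real.log_div (by linarith) (ne_of_gt hz4pos)]
        have h2 : Real.log (z / (z - 1 / 4)) ≤ z / (z - 1 / 4) - 1 :=
          Real.log_le_sub_one_of_pos (by positivity)
        have h3 : z / (z - 1 / 4) - 1 = (1 / 4) / (z - 1 / 4) := by
          rw [div_sub_one (ne_of_gt hz4pos)]
          norm_num
        have h4 : ε ≤ (1 / 4) / (z - 1 / 4) := by rw [hεdef, h1]; linarith [h3 ▸ h2]
        calc ε * Real.exp u = ε * (z - 1 / 4) := by rw [hexpu]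
          _ ≤ (1 / 4) / (z - 1 / 4) * (z - 1 / 4) := by
              apply mul_le_mul_of_nonneg_right h4 (le_of_lt hz4pos) |>.trans_eq rfl |>.trans
                (le_refl _)
          _ = 1 / 4 := div_mul_cancel₀ _ (ne_of_gt hz4pos)
      -- P2 v ≤ (1+ε)^(n+2) P2 u
      have hfact : Pprod (n + 2) v ≤ (1 + ε) ^ (n + 2) * Pprod (n + 2) u := by
        have h1 : Pprod (n + 2) v ≤ ∏ j ∈ Finset.Icc 1 (n + 2), ((1 + ε) * Real.log^[j] u) := by
          unfold Pprod
          apply Finset.prod_le_prod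
          · intro j hj
            exact le_of_lt (iterlog_pos (le_trans
              (etower_mono (Finset.mem_Icc.mp hj).2) hvE2))
          · intro j hj
            have hje : etower j ≤ u :=
              le_trans (etower_mono (Finset.mem_Icc.mp hj).2) (le_trans (le_refl E2) hu2)
            have hlip : Real.log^[j] v ≤ Real.log^[j] u + ε := by
              rw [hεdef]; exact iterlog_lip j hje huv
            have hone : 1 ≤ Real.log^[j] u := one_le_iterlog hje
            have hprod : 0 ≤ ε * (Real.log^[j] u - 1) :=
              mul_nonneg hε0 (by linarith)
            linarith [hlip, hprod]
        have h2 : ∏ j ∈ Finset.Icc 1 (n + 2), ((1 + ε) * Real.log^[j] u)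
            = (1 + ε) ^ (n + 2) * Pprod (n + 2) u := by
          rw [Finset.prod_mul_distrib, Finset.prod_const, Nat.card_Icc,
            show n + 2 + 1 - 1 = n + 2 from rfl]
          rfl
        linarith
      have hP2v_nonneg : 0 ≤ Pprod (n + 2) v := Pprod_nonneg hvE2
      have hP2u_nonneg : 0 ≤ Pprod (n + 2) u := Pprod_nonneg hu2
      have hvle : v * Pprod (n + 2) v ≤ (1 + ε) ^ (n + 3) * (u * Pprod (n + 2) u) := by
        have hv_u : v ≤ (1 + ε) * u := by
          have hprod : 0 ≤ ε * (u - 1) := mul_nonneg hε0 (by linarith)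
          have hεv : ε = v - u := hεdef
          linarith [hprod]
        have h1 : v * Pprod (n + 2) v ≤ ((1 + ε) * u) * ((1 + ε) ^ (n + 2) * Pprod (n + 2) u) :=
          mul_le_mul hv_u hfact hP2v_nonneg (by positivity)
        have h2 : ((1 + ε) * u) * ((1 + ε) ^ (n + 2) * Pprod (n + 2) u)
            = (1 + ε) ^ (n + 3) * (u * Pprod (n + 2) u) := by
          rw [pow_succ]
          ring
        linarith
      have hpow : (1 + ε) ^ (n + 3) ≤ Real.exp (((n : ℝ) + 3) * ε) := by
        have h1 : 1 + ε ≤ Real.exp ε := by linarith [Real.add_one_le_exp ε]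
        have h2 : (1 + ε) ^ (n + 3) ≤ Real.exp ε ^ (n + 3) :=
          pow_le_pow_left₀ (by linarith) h1 _
        rw [show ((n : ℝ) + 3) = ((n + 3 : ℕ) : ℝ) by push_cast; ring, Real.exp_nat_mul]
        exact h2
      set s := ((n : ℝ) + 3) * ε with hsdef
      clear_value s
      have hn3u : (n : ℝ) + 3 ≤ u := by
        have h := nat_add_one_le_etower (n + 2)
        push_cast at h
        have : ((n : ℝ) + 2) + 1 ≤ E2 := by rw [hE2def]; convert h using 2
        linarith
      have hs0 : 0 ≤ s := by
        rw [hsdef]; exact mul_nonneg (by positivity) hε0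
      have huexp : u ≤ Real.exp u := by linarith [Real.add_one_le_exp u]
      have hs1 : s ≤ 1 := by
        have h2 : s * Real.exp u ≤ ((n : ℝ) + 3) * (1 / 4) := by
          calc s * Real.exp u = ((n : ℝ) + 3) * (ε * Real.exp u) := by rw [hsdef]; ring
            _ ≤ ((n : ℝ) + 3) * (1 / 4) :=
                mul_le_mul_of_nonneg_left hεsmall (by positivity)
        have hx : s * Real.exp u ≤ (1 / 4) * Real.exp u := by linarith [h2, hn3u, huexp]
        have hs14 := le_of_mul_le_mul_right hx (Real.exp_pos u)
        linarith
      have hexps : Real.exp s ≤ 3 := by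
        calc Real.exp s ≤ Real.exp 1 := Real.exp_le_exp.mpr hs1
          _ ≤ 3 := by linarith [Real.exp_one_lt_d9]
      have hes1 : Real.exp s - 1 ≤ 3 * s := by
        have h1 := Real.add_one_le_exp (-s)
        have h2 : Real.exp (-s) * Real.exp s = 1 := by rw [← Real.exp_add]; simp
        have h3 := mul_le_mul_of_nonneg_right h1 (Real.exp_pos s).le
        have h4 := mul_le_mul_of_nonneg_left hexps hs0
        linarith [h3, h4, h2]
      have hgap1 : v * Pprod (n + 2) v - u * Pprod (n + 2) u
          ≤ 3 * s * (u * Pprod (n + 2) u) := by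
        have h1 : v * Pprod (n + 2) v ≤ Real.exp s * (u * Pprod (n + 2) u) :=
          le_trans hvle (mul_le_mul_of_nonneg_right hpow (by positivity))
        have h2 := mul_le_mul_of_nonneg_right hes1
          (mul_nonneg (le_of_lt hupos) hP2u_nonneg)
        linarith [h1, h2]

      have hP2upow : u * Pprod (n + 2) u ≤ u ^ (n + 3) := by
        have h1 : Pprod (n + 2) u ≤ u ^ (n + 2) := Pprod_le_pow hu2
        calc u * Pprod (n + 2) u ≤ u * u ^ (n + 2) :=
              mul_le_mul_of_nonneg_left h1 (le_of_lt hupos)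
          _ = u ^ (n + 3) := by rw [← pow_succ']
      have hkey : ((n : ℝ) + 3) * u ^ (n + 3) ≤ Real.exp u := by
        set t := Real.log u with htdef
        have hut : u = Real.exp t := (Real.exp_log hupos).symm
        have htE1 : E1 ≤ t := by
          calc E1 = Real.log E2 := by rw [hE2def, etower_succ, Real.log_exp]
            _ ≤ Real.log u := Real.log_le_log hE2pos hu2
        have htpos : 0 < t := lt_of_lt_of_le hE1pos htE1
        have hn2t : (n : ℝ) + 2 ≤ t := by
          have h := nat_add_one_le_etower (n + 1)
          push_cast at h
          have : ((n : ℝ) + 1) + 1 ≤ E1 := by rw [hE1def]; convert h using 2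
          linarith
        have hlogn3 : Real.log ((n : ℝ) + 3) ≤ (n : ℝ) + 2 := by
          have := Real.log_le_sub_one_of_pos (show (0:ℝ) < (n : ℝ) + 3 by positivity)
          linarith
        have he1t : Real.exp 1 ≤ t := by
          have h1 : etower 1 ≤ E1 := by rw [hE1def]; exact etower_mono (by omega)
          have h2 : etower 1 = Real.exp 1 := rfl
          linarith
        have hsq := sq_add_le_exp he1t
        have hupow : u ^ (n + 3) = Real.exp (((n : ℝ) + 3) * t) := by
          rw [hut, ← Real.exp_nat_mul]
          congr 1
          push_cast
          ring
        have hn3exp : ((n : ℝ) + 3) = Real.exp (Real.log ((n : ℝ) + 3)) :=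
          (Real.exp_log (by positivity)).symm
        have hcalc : Real.log ((n : ℝ) + 3) + ((n : ℝ) + 3) * t ≤ u := by
          have hup : ((n : ℝ) + 3) * t ≤ (t + 1) * t :=
            mul_le_mul_of_nonneg_right (by linarith) (le_of_lt htpos)
          have hsqu : t ^ 2 + 2 * t ≤ u := by rw [hut]; exact hsq
          linarith [hup, hsqu, hlogn3, hn2t]

        calc ((n : ℝ) + 3) * u ^ (n + 3)
            = Real.exp (Real.log ((n : ℝ) + 3) + ((n : ℝ) + 3) * t) := by
              rw [Real.exp_add, hupow, ← hn3exp]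
          _ ≤ Real.exp u := Real.exp_le_exp.mpr hcalc
      have hfinal : 3 * s * (u * Pprod (n + 2) u) ≤ 1 := by
        have h1 : s * (u * Pprod (n + 2) u) ≤ s * u ^ (n + 3) :=
          mul_le_mul_of_nonneg_left hP2upow hs0
        have h2 : s * u ^ (n + 3) = ((n : ℝ) + 3) * u ^ (n + 3) * ε := by
          rw [hsdef]; ring
        have h3 : ((n : ℝ) + 3) * u ^ (n + 3) * ε ≤ Real.exp u * ε :=
          mul_le_mul_of_nonneg_right hkey hε0
        have h4 : Real.exp u * ε ≤ 1 / 4 := by linarith [hεsmall]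
        linarith
      linarith [hgap1, hfinal, hE2one]
    -- assemble the integral lower bound
    have haC0 : 0 ≤ a + C := by linarith
    have hPle' : (a + C) * (∫ w in E2..u, Pprod (n + 1) w)
        ≤ (a + C) * ((u - E2) * Pprod (n + 1) u) :=
      mul_le_mul_of_nonneg_left hPle haC0
    have hTlow : u * Pprod (n + 2) u - E2 * Pprod (n + 2) E2
        - (a + C) * ((u - E2) * Pprod (n + 1) u)
        ≤ ∫ w in hseq (n + 2)..u, Tfun (n + 2) w := by
      have h1 : u * Pprod (n + 2) u - E2 * Pprod (n + 2) E2
          - (a + C) * ((u - E2) * Pprod (n + 1) u)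
          ≤ (∫ w in E2..u, Gd (n + 2) w) - (a + C) * ∫ w in E2..u, Pprod (n + 1) w := by
        rw [hFTC]
        linarith
      have h2 : (∫ w in E2..u, Gd (n + 2) w) - (a + C) * (∫ w in E2..u, Pprod (n + 1) w)
          = ∫ w in E2..u, (Gd (n + 2) w - (a + C) * Pprod (n + 1) w) := by
        rw [hsub, hconstmul]
      rw [hsplitInt]
      linarith [hmonoInt, h2 ▸ h1]
    -- final algebra
    rw [hshift1, hshift2]
    have hvnn : 0 ≤ v := by linarith
    have hx1 : u * Pprod (n + 1) u ≤ v * Pprod (n + 1) v :=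
      mul_le_mul huv hP1v hP1u_nonneg hvnn
    have hd : E2 * Pprod (n + 1) u ≤ v * Pprod (n + 1) v - (u - E2) * Pprod (n + 1) u := by
      linarith [hx1]
    have hy1 : (1 + C) * (E2 * Pprod (n + 1) u)
        ≤ (a + C) * (v * Pprod (n + 1) v - (u - E2) * Pprod (n + 1) u) := by
      apply mul_le_mul (by linarith) hd (by positivity) haC0
    have hy3 : E2 * Pprod (n + 1) E2 ≤ E2 * Pprod (n + 1) u :=
      mul_le_mul_of_nonneg_left hP1E2 (le_of_lt hE2pos)
    have hgoal : v * Pprod (n + 2) v - (a + C) * (v * Pprod (n + 1) v)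
        ≤ u * Pprod (n + 2) u - E2 * Pprod (n + 2) E2
          - (a + C) * ((u - E2) * Pprod (n + 1) u) := by
      rw [hP2E2]
      linarith [hgap, hslack, hy1, hy3]
    linarith [hTlow, hgoal]
end
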